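/- Let n ≥ 1000 be an integer and let A > 1 be a real number. In the Erdős–Rényi random graph G(n, 1/n), the largest connected component C₁ satisfies P(|C₁| > A·n^{2/3}) ≤ 6·A^{-3/2}. -/

import Mathlib

open MeasureTheory ProbabilityTheory
open scoped ENNReal

/-- The Bernoulli(p) measure on `Bool` (a probability measure when `p ≤ 1`). -/
noncomputable def bernoulliMeasure (p : ℝ≥0∞) : Measure Bool :=
  p • Measure.dirac true + (1 - p) • Measure.dirac false

/-- The Erdős–Rényi measure `G(n,p)`: each potential edge of the complete graph on
`Fin n` is retained independently with probability `p`. -/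
noncomputable def erdosRenyi (n : ℕ) (p : ℝ≥0∞) : Measure (Sym2 (Fin n) → Bool) :=
  Measure.pi fun _ => bernoulliMeasure p

/-- The simple graph on `Fin n` determined by the edge indicators `ω`. -/
def graphOf {n : ℕ} (ω : Sym2 (Fin n) → Bool) : SimpleGraph (Fin n) :=
  SimpleGraph.fromRel fun v w => ω s(v, w) = true

/-- `|C(v)|`: the number of vertices of the connected component of `v`. -/
noncomputable def compSize {n : ℕ} (ω : Sym2 (Fin n) → Bool) (v : Fin n) : ℕ :=
  Nat.card {w | (graphOf ω).Reachable v w}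

/-- `|C₁|`: the number of vertices of the largest connected component. -/
noncomputable def maxCompSize (n : ℕ) (ω : Sym2 (Fin n) → Bool) : ℕ :=
  Finset.univ.sup fun v : Fin n => compSize ω v

open Finset

namespace NPaux

lemma sum_desc_mul (p q : ℝ) : ∀ (r n : ℕ),
    ∑ k ∈ range (n+1), (k.descFactorial r : ℝ) * ((n.choose k : ℝ) * p^k * q^(n-k))
      = (n.descFactorial r : ℝ) * p^r * (p+q)^(n-r) := by
  intro r
  induction r with
  | zero =>
    intro n
    simp only [Nat.descFactorial_zero, Nat.cast_one, one_mul, pow_zero, Nat.sub_zero]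
    rw [add_pow]
    congr 1; ext k; ring
  | succ r ih =>
    intro n
    cases n with
    | zero => simp
    | succ N =>
      rw [Finset.sum_range_succ']
      have f0 : ((0:ℕ).descFactorial (r+1) : ℝ) * (((N+1).choose 0 : ℝ) * p^0 * q^(N+1-0)) = 0 := by
        simp
      rw [f0, add_zero]
      have key : ∀ i ∈ range (N+1),
          ((i+1).descFactorial (r+1) : ℝ) * (((N+1).choose (i+1) : ℝ) * p^(i+1) * q^(N+1-(i+1)))
            = ((N+1:ℕ):ℝ) * p * ((i.descFactorial r : ℝ) * ((N.choose i : ℝ) * p^i * q^(N-i))) := by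
        intro i hi
        have h1 : (i+1).descFactorial (r+1) = (i+1) * i.descFactorial r :=
          Nat.succ_descFactorial_succ i r
        have h2 : (N+1) * N.choose i = (N+1).choose (i+1) * (i+1) :=
          Nat.add_one_mul_choose_eq N i
        have h3 : N + 1 - (i+1) = N - i := by omega
        have h2' : ((N+1:ℕ):ℝ) * (N.choose i : ℝ) = ((N+1).choose (i+1) : ℝ) * ((i:ℝ)+1) := by
          exact_mod_cast congrArg (Nat.cast (R := ℝ)) h2
        rw [h1, h3]
        push_cast at h2' ⊢
        linear_combination (-((i.descFactorial r : ℝ) * p^(i+1) * q^(N-i))) * h2'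
      rw [Finset.sum_congr rfl key, ← Finset.mul_sum, ih N]
      have h4 : (N+1).descFactorial (r+1) = (N+1) * N.descFactorial r :=
        Nat.succ_descFactorial_succ N r
      have h5 : N + 1 - (r+1) = N - r := by omega
      rw [h4, h5]
      push_cast
      ring

/-! ### The binomial pmf and its moments -/

noncomputable def bb (n k : ℕ) : ℝ := (n.choose k : ℝ) * ((n:ℝ)⁻¹)^k * (1 - (n:ℝ)⁻¹)^(n-k)

lemma bp_nonneg (n : ℕ) : 0 ≤ ((n:ℝ)⁻¹) := by positivity

lemma bq_nonneg (n : ℕ) : 0 ≤ 1 - ((n:ℝ)⁻¹) := by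
  rcases Nat.eq_zero_or_pos n with h | h
  · simp [h]
  · have : ((n:ℝ))⁻¹ ≤ 1 := by
      rw [inv_le_one_iff₀]; right; exact_mod_cast h
    linarith

lemma bb_nonneg (n k : ℕ) : 0 ≤ bb n k := by
  unfold bb
  have := bq_nonneg n
  positivity

lemma bb_mom (n r : ℕ) :
    ∑ k ∈ range (n+1), (k.descFactorial r : ℝ) * bb n k
      = (n.descFactorial r : ℝ) * ((n:ℝ)⁻¹)^r := by
  have h := sum_desc_mul ((n:ℝ)⁻¹) (1 - (n:ℝ)⁻¹) r n
  simp only [add_sub_cancel, one_pow, mul_one] at h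
  exact h

lemma bb_S0 (n : ℕ) : ∑ k ∈ range (n+1), bb n k = 1 := by
  have h := bb_mom n 0
  simpa using h

lemma bb_S1 (n : ℕ) (hn : 1 ≤ n) : ∑ k ∈ range (n+1), (k:ℝ) * bb n k = 1 := by
  have h := bb_mom n 1
  simp only [Nat.descFactorial_one, pow_one] at h
  rw [h, mul_inv_cancel₀]
  have : 0 < n := hn
  positivity

lemma cast_desc2 (k : ℕ) : ((k.descFactorial 2 : ℕ) : ℝ) = (k:ℝ) * ((k:ℝ) - 1) := by
  cases k with
  | zero => simp
  | succ j =>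
    rw [Nat.descFactorial_succ, Nat.descFactorial_one]
    push_cast
    ring

lemma cast_desc3 (k : ℕ) : ((k.descFactorial 3 : ℕ) : ℝ) = (k:ℝ) * ((k:ℝ) - 1) * ((k:ℝ) - 2) := by
  match k with
  | 0 => simp
  | 1 => simp [Nat.descFactorial]
  | (j+2) =>
    rw [Nat.descFactorial_succ, Nat.descFactorial_succ, Nat.descFactorial_one]
    push_cast
    ring

lemma bb_S2 (n : ℕ) (hn : 1 ≤ n) :
    ∑ k ∈ range (n+1), (k:ℝ) * ((k:ℝ) - 1) * bb n k = ((n:ℝ) - 1) / n := by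
  have h := bb_mom n 2
  have h2 : ∀ k ∈ range (n+1), ((k.descFactorial 2 : ℕ) : ℝ) * bb n k
      = (k:ℝ) * ((k:ℝ) - 1) * bb n k := by
    intro k _; rw [cast_desc2]
  rw [Finset.sum_congr rfl h2] at h
  rw [h, cast_desc2]
  have hn' : (n:ℝ) ≠ 0 := by have : 0 < n := hn; positivity
  field_simp

lemma bb_S3 (n : ℕ) (hn : 1 ≤ n) :
    ∑ k ∈ range (n+1), (k:ℝ) * ((k:ℝ) - 1) * ((k:ℝ) - 2) * bb n k
      = ((n:ℝ) - 1) * ((n:ℝ) - 2) / (n:ℝ)^2 := by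
  have h := bb_mom n 3
  have h2 : ∀ k ∈ range (n+1), ((k.descFactorial 3 : ℕ) : ℝ) * bb n k
      = (k:ℝ) * ((k:ℝ) - 1) * ((k:ℝ) - 2) * bb n k := by
    intro k _; rw [cast_desc3]
  rw [Finset.sum_congr rfl h2] at h
  rw [h, cast_desc3]
  have hn' : (n:ℝ) ≠ 0 := by have : 0 < n := hn; positivity
  field_simp

/-! ### Walk operators -/

noncomputable def Top (n : ℕ) (f : ℕ → ℝ) : ℕ → ℝ :=
  fun a => if 1 ≤ a then ∑ k ∈ range (n+1), bb n k * f (a-1+k) else f a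

noncomputable def TBop (n B : ℕ) (f : ℕ → ℝ) : ℕ → ℝ :=
  fun a => if 1 ≤ a ∧ a < B then ∑ k ∈ range (n+1), bb n k * f (a-1+k) else f a

lemma T_mono {n : ℕ} {f g : ℕ → ℝ} (h : ∀ x, f x ≤ g x) : ∀ a, Top n f a ≤ Top n g a := by
  intro a
  unfold Top
  split
  · exact Finset.sum_le_sum fun k _ => mul_le_mul_of_nonneg_left (h _) (bb_nonneg n k)
  · exact h a

lemma TB_mono {n B : ℕ} {f g : ℕ → ℝ} (h : ∀ x, f x ≤ g x) :
    ∀ a, TBop n B f a ≤ TBop n B g a := by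
  intro a
  unfold TBop
  split
  · exact Finset.sum_le_sum fun k _ => mul_le_mul_of_nonneg_left (h _) (bb_nonneg n k)
  · exact h a

lemma TB_iter_mono {n B : ℕ} {f g : ℕ → ℝ} (h : ∀ x, f x ≤ g x) :
    ∀ j a, (TBop n B)^[j] f a ≤ (TBop n B)^[j] g a := by
  intro j
  induction j generalizing f g with
  | zero => exact h
  | succ j ih =>
    intro a
    rw [Function.iterate_succ_apply, Function.iterate_succ_apply]
    exact ih (TB_mono h) a

lemma T_iter_mono {n : ℕ} {f g : ℕ → ℝ} (h : ∀ x, f x ≤ g x) :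
    ∀ j a, (Top n)^[j] f a ≤ (Top n)^[j] g a := by
  intro j
  induction j generalizing f g with
  | zero => exact h
  | succ j ih =>
    intro a
    rw [Function.iterate_succ_apply, Function.iterate_succ_apply]
    exact ih (T_mono h) a

lemma TB_smul {n B : ℕ} (c : ℝ) (f : ℕ → ℝ) :
    ∀ a, TBop n B (fun x => c * f x) a = c * TBop n B f a := by
  intro a
  unfold TBop
  split
  · rw [Finset.mul_sum]
    congr 1; ext k; ring
  · rfl

lemma TB_iter_smul {n B : ℕ} (c : ℝ) (f : ℕ → ℝ) :
    ∀ j a, (TBop n B)^[j] (fun x => c * f x) a = c * (TBop n B)^[j] f a := by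
  intro j
  induction j generalizing f with
  | zero => intro a; rfl
  | succ j ih =>
    intro a
    rw [Function.iterate_succ_apply, Function.iterate_succ_apply]
    have : TBop n B (fun x => c * f x) = fun x => c * TBop n B f x := funext (TB_smul c f)
    rw [this]
    exact ih (TBop n B f) a

lemma TB_add {n B : ℕ} (f g : ℕ → ℝ) :
    ∀ a, TBop n B (fun x => f x + g x) a = TBop n B f a + TBop n B g a := by
  intro a
  unfold TBop
  split
  · rw [← Finset.sum_add_distrib]
    congr 1; ext k; ring
  · rfl

lemma TB_iter_add {n B : ℕ} (f g : ℕ → ℝ) :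
    ∀ j a, (TBop n B)^[j] (fun x => f x + g x) a = (TBop n B)^[j] f a + (TBop n B)^[j] g a := by
  intro j
  induction j generalizing f g with
  | zero => intro a; rfl
  | succ j ih =>
    intro a
    rw [Function.iterate_succ_apply, Function.iterate_succ_apply, Function.iterate_succ_apply]
    have : TBop n B (fun x => f x + g x) = fun x => TBop n B f x + TBop n B g x :=
      funext (TB_add f g)
    rw [this]
    exact ih (TBop n B f) (TBop n B g) a

/-! ### Specific functions -/

def wfun : ℕ → ℝ := fun a => (a:ℝ)
noncomputable def chif : ℕ → ℝ := fun a => if 1 ≤ a then 1 else 0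
noncomputable def uBf (B : ℕ) : ℕ → ℝ := fun a => if B ≤ a then 1 else 0
noncomputable def lBf (B : ℕ) : ℕ → ℝ := fun a => if 1 ≤ a ∧ a < B then 1 else 0
noncomputable def vcf (B : ℕ) : ℕ → ℝ :=
  fun a => if a ≤ B then (a:ℝ)^2 else 2*(B:ℝ)*(a:ℝ) - (B:ℝ)^2

lemma step_id {n : ℕ} (hn : 1 ≤ n) {a : ℕ} (ha : 1 ≤ a) :
    ∑ k ∈ range (n+1), bb n k * ((a-1+k : ℕ) : ℝ) = (a:ℝ) := by
  have hc : ∀ k ∈ range (n+1), bb n k * ((a-1+k : ℕ) : ℝ)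
      = ((a:ℝ) - 1) * bb n k + (k:ℝ) * bb n k := by
    intro k _
    have : ((a-1+k : ℕ) : ℝ) = (a:ℝ) - 1 + (k:ℝ) := by
      push_cast [Nat.cast_sub ha]; ring
    rw [this]; ring
  rw [Finset.sum_congr rfl hc, Finset.sum_add_distrib, ← Finset.mul_sum, bb_S0, bb_S1 n hn]
  ring

lemma TB_w {n B : ℕ} (hn : 1 ≤ n) : ∀ a, TBop n B wfun a = wfun a := by
  intro a
  unfold TBop
  split
  · next h => exact step_id hn h.1
  · rfl

lemma TB_iter_w {n B : ℕ} (hn : 1 ≤ n) : ∀ j a, (TBop n B)^[j] wfun a = wfun a := by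
  intro j
  induction j with
  | zero => intro a; rfl
  | succ j ih =>
    intro a
    rw [Function.iterate_succ_apply]
    have : TBop n B wfun = wfun := funext (TB_w hn)
    rw [this]; exact ih a

lemma up_bound {n B : ℕ} (hn : 1 ≤ n) (hB : 1 ≤ B) (M : ℕ) :
    (TBop n B)^[M] (uBf B) 1 ≤ 1 / (B:ℝ) := by
  have hle : ∀ x, (fun x => (B:ℝ) * uBf B x) x ≤ wfun x := by
    intro x
    simp only [uBf, wfun]
    split
    · next h => simpa using (Nat.cast_le (α := ℝ)).2 h
    · simp
  have h1 : (TBop n B)^[M] (fun x => (B:ℝ) * uBf B x) 1 ≤ (TBop n B)^[M] wfun 1 :=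
    TB_iter_mono hle M 1
  rw [TB_iter_w hn, TB_iter_smul] at h1
  have hBpos : (0:ℝ) < B := by exact_mod_cast hB
  rw [le_div_iff₀ hBpos]
  calc (TBop n B)^[M] (uBf B) 1 * (B:ℝ) = (B:ℝ) * (TBop n B)^[M] (uBf B) 1 := by ring
  _ ≤ wfun 1 := h1
  _ = 1 := by simp [wfun]



lemma chi_eq {B : ℕ} (hB : 1 ≤ B) : ∀ a, chif a = uBf B a + lBf B a := by
  intro a
  unfold chif uBf lBf
  rcases Nat.lt_or_ge a 1 with h | h
  · have h0 : a = 0 := by omega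
    subst h0
    rw [if_neg (by omega), if_neg (by omega), if_neg (by omega)]
    norm_num
  · rcases Nat.lt_or_ge a B with h2 | h2
    · rw [if_pos h, if_neg (by omega), if_pos ⟨h, h2⟩]; ring
    · rw [if_pos h, if_pos h2, if_neg (by omega)]; ring

lemma TB_preserve01 {n B : ℕ} {f : ℕ → ℝ} (h0 : ∀ x, 0 ≤ f x) (h1 : ∀ x, f x ≤ 1) :
    (∀ x, 0 ≤ TBop n B f x) ∧ (∀ x, TBop n B f x ≤ 1) := by
  constructor
  · intro a
    unfold TBop
    split
    · exact Finset.sum_nonneg fun k _ => mul_nonneg (bb_nonneg n k) (h0 _)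
    · exact h0 a
  · intro a
    unfold TBop
    split
    · calc ∑ k ∈ range (n+1), bb n k * f (a-1+k)
          ≤ ∑ k ∈ range (n+1), bb n k * 1 :=
            Finset.sum_le_sum fun k _ => mul_le_mul_of_nonneg_left (h1 _) (bb_nonneg n k)
      _ = 1 := by simp only [mul_one]; exact bb_S0 n
    · exact h1 a

lemma TB_iter01 {n B : ℕ} :
    ∀ j, (∀ x, 0 ≤ (TBop n B)^[j] chif x) ∧ (∀ x, (TBop n B)^[j] chif x ≤ 1) := by
  intro j
  induction j with
  | zero =>
    constructor <;> intro x <;> unfold chif <;> simp <;> split <;> norm_num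
  | succ j ih =>
    have := TB_preserve01 (n := n) (B := B) ih.1 ih.2
    constructor <;> intro x <;> rw [Function.iterate_succ_apply']
    · exact this.1 x
    · exact this.2 x

lemma TB_absorbed_fix {n B : ℕ} {f : ℕ → ℝ} {a : ℕ} (ha : ¬(1 ≤ a ∧ a < B)) :
    ∀ j, (TBop n B)^[j] f a = f a := by
  intro j
  induction j with
  | zero => rfl
  | succ j ih =>
    rw [Function.iterate_succ_apply']
    unfold TBop
    rw [if_neg ha]
    exact ih

lemma T_le_TB_chi {n B : ℕ} : ∀ j a, (Top n)^[j] chif a ≤ (TBop n B)^[j] chif a := by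
  intro j
  induction j with
  | zero => intro a; exact le_refl _
  | succ j ih =>
    intro a
    rw [Function.iterate_succ_apply', Function.iterate_succ_apply']
    calc Top n ((Top n)^[j] chif) a ≤ Top n ((TBop n B)^[j] chif) a :=
          T_mono (fun x => ih x) a
    _ ≤ TBop n B ((TBop n B)^[j] chif) a := by
        set F := (TBop n B)^[j] chif with hF
        unfold Top TBop
        rcases Nat.lt_or_ge a 1 with h0 | h1
        · rw [if_neg (by omega), if_neg (by omega)]
        · rcases Nat.lt_or_ge a B with h2 | h2
          · rw [if_pos h1, if_pos ⟨h1, h2⟩]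
          · rw [if_pos h1, if_neg (by omega)]
            have hfix : F a = chif a := TB_absorbed_fix (by omega) j
            have hchi : chif a = 1 := by unfold chif; rw [if_pos h1]
            rw [hfix, hchi]
            calc ∑ k ∈ range (n+1), bb n k * F (a-1+k)
                ≤ ∑ k ∈ range (n+1), bb n k * 1 :=
                  Finset.sum_le_sum fun k _ =>
                    mul_le_mul_of_nonneg_left ((TB_iter01 j).2 _) (bb_nonneg n k)
            _ = 1 := by simp only [mul_one]; exact bb_S0 n

lemma TB_lB_dec {n B : ℕ} : ∀ a, TBop n B (lBf B) a ≤ lBf B a := by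
  intro a
  unfold TBop
  split
  · next h =>
    have : lBf B a = 1 := by unfold lBf; rw [if_pos h]
    rw [this]
    calc ∑ k ∈ range (n+1), bb n k * lBf B (a-1+k)
        ≤ ∑ k ∈ range (n+1), bb n k * 1 :=
          Finset.sum_le_sum fun k _ => by
            apply mul_le_mul_of_nonneg_left _ (bb_nonneg n k)
            unfold lBf; split <;> norm_num
    _ = 1 := by simp only [mul_one]; exact bb_S0 n
  · exact le_refl _

lemma TB_lB_antitone {n B : ℕ} : ∀ i j, i ≤ j → ∀ a,
    (TBop n B)^[j] (lBf B) a ≤ (TBop n B)^[i] (lBf B) a := by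
  have step : ∀ i a, (TBop n B)^[i+1] (lBf B) a ≤ (TBop n B)^[i] (lBf B) a := by
    intro i a
    rw [Function.iterate_succ_apply]
    exact TB_iter_mono (TB_lB_dec) i a
  intro i j hij a
  induction j with
  | zero => have : i = 0 := by omega
            subst this; exact le_refl _
  | succ j ih =>
    rcases Nat.lt_or_ge i (j+1) with h | h
    · exact le_trans (step j a) (ih (by omega))
    · have : i = j+1 := by omega
      subst this; exact le_refl _



lemma cube_nonneg : ∀ k : ℕ, 0 ≤ (k:ℝ) * ((k:ℝ) - 1) * ((k:ℝ) - 2) := by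
  intro k
  rcases Nat.lt_or_ge k 3 with h | h
  · interval_cases k <;> norm_num
  · have h3 : (3:ℝ) ≤ (k:ℝ) := by exact_mod_cast h
    have : (0:ℝ) ≤ (k:ℝ)-2 := by linarith
    have : (0:ℝ) ≤ (k:ℝ)-1 := by linarith
    have : (0:ℝ) ≤ (k:ℝ) := by linarith
    positivity

lemma sq_le_cube : ∀ k : ℕ, ((k-2:ℕ):ℝ)^2 ≤ (k:ℝ) * ((k:ℝ) - 1) * ((k:ℝ) - 2) / 6 := by
  intro k
  rcases Nat.lt_or_ge k 4 with h | h
  · interval_cases k <;> norm_num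
  · have h4 : (4:ℝ) ≤ (k:ℝ) := by exact_mod_cast h
    have hc : ((k-2:ℕ):ℝ) = (k:ℝ) - 2 := by
      push_cast [Nat.cast_sub (by omega : 2 ≤ k)]; ring
    rw [hc, le_div_iff₀ (by norm_num : (0:ℝ) < 6)]
    have e1 : (0:ℝ) ≤ ((k:ℝ)-2)*((k:ℝ)-3)*((k:ℝ)-4) := by
      have : (0:ℝ) ≤ (k:ℝ)-4 := by linarith
      have : (0:ℝ) ≤ (k:ℝ)-3 := by linarith
      have : (0:ℝ) ≤ (k:ℝ)-2 := by linarith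
      positivity
    nlinarith [e1]

lemma vc_eq {B : ℕ} : ∀ x, vcf B x
    = (x:ℝ)^2 - (if B ≤ x then ((x-B:ℕ):ℝ)^2 else 0) := by
  intro x
  unfold vcf
  rcases le_or_gt x B with h | h
  · rw [if_pos h]
    split
    · next h2 =>
      have : x = B := le_antisymm h h2
      subst this
      simp
    · ring
  · rw [if_neg (by omega), if_pos (le_of_lt h)]
    have : ((x-B:ℕ):ℝ) = (x:ℝ) - B := by
      push_cast [Nat.cast_sub (le_of_lt h)]; ring
    rw [this]
    ring

lemma exc_term {B a : ℕ} (ha : 1 ≤ a) (haB : a < B) (k : ℕ) :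
    (if B ≤ a-1+k then ((a-1+k-B:ℕ):ℝ)^2 else 0) ≤ (k:ℝ) * ((k:ℝ)-1) * ((k:ℝ)-2) / 6 := by
  split
  · next hcase =>
    have h1 : a-1+k-B ≤ k-2 := by omega
    calc ((a-1+k-B:ℕ):ℝ)^2 ≤ ((k-2:ℕ):ℝ)^2 := by
          have := (Nat.cast_le (α := ℝ)).2 h1
          have h0 : (0:ℝ) ≤ ((a-1+k-B:ℕ):ℝ) := Nat.cast_nonneg _
          nlinarith
    _ ≤ (k:ℝ) * ((k:ℝ)-1) * ((k:ℝ)-2) / 6 := sq_le_cube k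
  · have := cube_nonneg k
    linarith

lemma TB_vc {n B : ℕ} (hn : 1000 ≤ n) (hB : 1 ≤ B) :
    ∀ a, vcf B a + (4/5) * lBf B a ≤ TBop n B (vcf B) a := by
  intro a
  unfold TBop
  split
  · next hlive =>
    obtain ⟨ha, haB⟩ := hlive
    have hn1 : 1 ≤ n := by omega
    have hnR : (1000:ℝ) ≤ (n:ℝ) := by exact_mod_cast hn
    have hnpos : (0:ℝ) < (n:ℝ) := by linarith
    -- expand vcf inside the sum
    have hsplit : ∑ k ∈ range (n+1), bb n k * vcf B (a-1+k)
        = (∑ k ∈ range (n+1), bb n k * ((a-1+k:ℕ):ℝ)^2)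
          - ∑ k ∈ range (n+1), bb n k * (if B ≤ a-1+k then ((a-1+k-B:ℕ):ℝ)^2 else 0) := by
      rw [← Finset.sum_sub_distrib]
      refine Finset.sum_congr rfl fun k _ => ?_
      rw [vc_eq]
      ring
    have hx2 : ∑ k ∈ range (n+1), bb n k * ((a-1+k:ℕ):ℝ)^2
        = ((a:ℝ))^2 + 1 - 1/(n:ℝ) := by
      have expand : ∀ k ∈ range (n+1), bb n k * ((a-1+k:ℕ):ℝ)^2
          = (((a:ℝ)-1)^2) * bb n k + (2*((a:ℝ)-1)) * ((k:ℝ) * bb n k)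
            + (k:ℝ)*((k:ℝ)-1)*bb n k + (k:ℝ)*bb n k := by
        intro k _
        have hcast : ((a-1+k:ℕ):ℝ) = (a:ℝ) - 1 + (k:ℝ) := by
          push_cast [Nat.cast_sub ha]; ring
        rw [hcast]; ring
      rw [Finset.sum_congr rfl expand]
      rw [Finset.sum_add_distrib, Finset.sum_add_distrib, Finset.sum_add_distrib,
        ← Finset.mul_sum, ← Finset.mul_sum, bb_S0, bb_S1 n hn1, bb_S2 n hn1]
      field_simp
      ring
    have hexc : ∑ k ∈ range (n+1), bb n k * (if B ≤ a-1+k then ((a-1+k-B:ℕ):ℝ)^2 else 0)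
        ≤ 1/6 := by
      calc ∑ k ∈ range (n+1), bb n k * (if B ≤ a-1+k then ((a-1+k-B:ℕ):ℝ)^2 else 0)
          ≤ ∑ k ∈ range (n+1), bb n k * ((k:ℝ) * ((k:ℝ)-1) * ((k:ℝ)-2) / 6) :=
            Finset.sum_le_sum fun k _ =>
              mul_le_mul_of_nonneg_left (exc_term ha haB k) (bb_nonneg n k)
      _ = (1/6) * ∑ k ∈ range (n+1), (k:ℝ) * ((k:ℝ)-1) * ((k:ℝ)-2) * bb n k := by
            rw [Finset.mul_sum]
            refine Finset.sum_congr rfl fun k _ => by ring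
      _ = (1/6) * (((n:ℝ) - 1) * ((n:ℝ) - 2) / (n:ℝ)^2) := by rw [bb_S3 n hn1]
      _ ≤ 1/6 := by
            have h1 : ((n:ℝ) - 1) * ((n:ℝ) - 2) / (n:ℝ)^2 ≤ 1 := by
              rw [div_le_one (by positivity)]
              nlinarith
            linarith
    have hvca : vcf B a = ((a:ℝ))^2 := by unfold vcf; rw [if_pos (le_of_lt haB)]
    have hlba : lBf B a = 1 := by unfold lBf; rw [if_pos ⟨ha, haB⟩]
    rw [hsplit, hx2, hvca, hlba]
    have hinv : 1/(n:ℝ) ≤ 1/1000 := by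
      rw [div_le_div_iff₀ hnpos (by norm_num)]
      linarith
    linarith
  · next h =>
    have : lBf B a = 0 := by unfold lBf; rw [if_neg h]
    rw [this]
    simp

lemma TB_sum {n B : ℕ} (F : ℕ → ℕ → ℝ) (s : Finset ℕ) :
    ∀ a, TBop n B (fun x => ∑ i ∈ s, F i x) a = ∑ i ∈ s, TBop n B (F i) a := by
  intro a
  unfold TBop
  split
  · simp only [Finset.mul_sum]
    exact Finset.sum_comm
  · rfl

lemma quad_iter {n B : ℕ} (hn : 1000 ≤ n) (hB : 1 ≤ B) :
    ∀ j a, vcf B a + (4/5) * (∑ i ∈ range j, (TBop n B)^[i] (lBf B) a)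
      ≤ (TBop n B)^[j] (vcf B) a := by
  intro j
  induction j with
  | zero => intro a; simp
  | succ j ih =>
    intro a
    rw [Function.iterate_succ_apply']
    have step1 : TBop n B (fun x => vcf B x + (4/5) * (∑ i ∈ range j, (TBop n B)^[i] (lBf B) x)) a
        ≤ TBop n B ((TBop n B)^[j] (vcf B)) a := TB_mono (fun x => ih x) a
    have step2 : TBop n B (fun x => vcf B x + (4/5) * (∑ i ∈ range j, (TBop n B)^[i] (lBf B) x)) a
        = TBop n B (vcf B) a + (4/5) * (∑ i ∈ range j, (TBop n B)^[i+1] (lBf B) a) := by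
      rw [TB_add]
      congr 1
      rw [TB_smul]
      congr 1
      rw [TB_sum]
      refine Finset.sum_congr rfl fun i _ => ?_
      rw [Function.iterate_succ_apply']
    have step3 : vcf B a + (4/5) * lBf B a ≤ TBop n B (vcf B) a := TB_vc hn hB a
    have step4 : ∑ i ∈ range (j+1), (TBop n B)^[i] (lBf B) a
        = (∑ i ∈ range j, (TBop n B)^[i+1] (lBf B) a) + lBf B a := by
      rw [Finset.sum_range_succ']
      rfl
    rw [step4]
    calc vcf B a + (4/5) * ((∑ i ∈ range j, (TBop n B)^[i+1] (lBf B) a) + lBf B a)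
        = (vcf B a + (4/5) * lBf B a) + (4/5) * (∑ i ∈ range j, (TBop n B)^[i+1] (lBf B) a) := by
          ring
    _ ≤ TBop n B (vcf B) a + (4/5) * (∑ i ∈ range j, (TBop n B)^[i+1] (lBf B) a) := by
          linarith [step3]
    _ = TBop n B (fun x => vcf B x + (4/5) * (∑ i ∈ range j, (TBop n B)^[i] (lBf B) x)) a := by
          rw [step2]
    _ ≤ TBop n B ((TBop n B)^[j] (vcf B)) a := step1

lemma vc_le_2Bw {B : ℕ} : ∀ a, vcf B a ≤ 2*(B:ℝ) * wfun a := by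
  intro a
  unfold vcf wfun
  split
  · next h =>
    have h1 : ((a:ℝ)) ≤ (B:ℝ) := by exact_mod_cast h
    have h0 : (0:ℝ) ≤ (a:ℝ) := Nat.cast_nonneg a
    nlinarith
  · have h0 : (0:ℝ) ≤ (B:ℝ)^2 := by positivity
    linarith

lemma sum_lB_le {n B : ℕ} (hn : 1000 ≤ n) (hB : 1 ≤ B) (M : ℕ) :
    ∑ i ∈ range M, (TBop n B)^[i] (lBf B) 1 ≤ (5/4) * (2*(B:ℝ) - 1) := by
  have h1 := quad_iter hn hB M 1
  have h2 : (TBop n B)^[M] (vcf B) 1 ≤ 2*(B:ℝ) := by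
    calc (TBop n B)^[M] (vcf B) 1 ≤ (TBop n B)^[M] (fun x => 2*(B:ℝ) * wfun x) 1 :=
          TB_iter_mono (fun x => vc_le_2Bw x) M 1
    _ = 2*(B:ℝ) * (TBop n B)^[M] wfun 1 := TB_iter_smul _ _ M 1
    _ = 2*(B:ℝ) := by rw [TB_iter_w (by omega)]; simp [wfun]
  have h3 : vcf B 1 = 1 := by
    unfold vcf; rw [if_pos hB]; norm_num
  rw [h3] at h1
  linarith

lemma TBM_lB_le {n B M : ℕ} (hn : 1000 ≤ n) (hB : 1 ≤ B) (hM : 1 ≤ M) :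
    (TBop n B)^[M] (lBf B) 1 ≤ (5/4) * (2*(B:ℝ) - 1) / M := by
  have hMR : (0:ℝ) < (M:ℝ) := by exact_mod_cast hM
  rw [le_div_iff₀ hMR]
  have h1 : (M:ℝ) * (TBop n B)^[M] (lBf B) 1 = ∑ _i ∈ range M, (TBop n B)^[M] (lBf B) 1 := by
    rw [Finset.sum_const, Finset.card_range, nsmul_eq_mul]
  have h2 : ∑ _i ∈ range M, (TBop n B)^[M] (lBf B) 1
      ≤ ∑ i ∈ range M, (TBop n B)^[i] (lBf B) 1 :=
    Finset.sum_le_sum fun i hi => TB_lB_antitone i M (by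
      have := Finset.mem_range.1 hi; omega) 1
  calc (TBop n B)^[M] (lBf B) 1 * (M:ℝ) = (M:ℝ) * (TBop n B)^[M] (lBf B) 1 := by ring
  _ ≤ ∑ i ∈ range M, (TBop n B)^[i] (lBf B) 1 := by rw [h1] at *; linarith [h2]
  _ ≤ (5/4) * (2*(B:ℝ) - 1) := sum_lB_le hn hB M

theorem walk_bound {n B M : ℕ} (hn : 1000 ≤ n) (hB : 1 ≤ B) (hM : 1 ≤ M) :
    (Top n)^[M] chif 1 ≤ 1/(B:ℝ) + (5/4) * (2*(B:ℝ) - 1) / M := by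
  calc (Top n)^[M] chif 1 ≤ (TBop n B)^[M] chif 1 := T_le_TB_chi M 1
  _ = (TBop n B)^[M] (uBf B) 1 + (TBop n B)^[M] (lBf B) 1 := by
      have : chif = fun x => uBf B x + lBf B x := funext (chi_eq hB)
      rw [this]
      exact TB_iter_add _ _ M 1
  _ ≤ 1/(B:ℝ) + (5/4) * (2*(B:ℝ) - 1) / M :=
      add_le_add (up_bound (by omega) hB M) (TBM_lB_le hn hB hM)



/-! ### Binomial stochastic domination -/

noncomputable def binS (p q : ℝ) (f : ℕ → ℝ) (c u : ℕ) : ℝ :=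
  ∑ k ∈ range (u+1), (u.choose k : ℝ) * p^k * q^(u-k) * f (c+k)

lemma binS_c_mono (p q : ℝ) (hp : 0 ≤ p) (hq : 0 ≤ q) (f : ℕ → ℝ) (hmono : Monotone f)
    (c u : ℕ) : binS p q f c u ≤ binS p q f (c+1) u := by
  refine Finset.sum_le_sum fun k _ => ?_
  have h1 : f (c+k) ≤ f (c+1+k) := hmono (by omega)
  have h2 : (0:ℝ) ≤ (u.choose k : ℝ) * p^k * q^(u-k) := by positivity
  nlinarith

lemma binS_step (p q : ℝ) (f : ℕ → ℝ) (u c : ℕ) :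
    binS p q f c (u+1) = p * binS p q f (c+1) u + q * binS p q f c u := by
  unfold binS
  rw [Finset.sum_range_succ']
  have hF0 : ((u+1).choose 0 : ℝ) * p^0 * q^(u+1-0) * f (c+0) = q^(u+1) * f c := by
    simp
  rw [hF0]
  have hsplit : ∀ i ∈ range (u+1),
      ((u+1).choose (i+1) : ℝ) * p^(i+1) * q^(u+1-(i+1)) * f (c+(i+1))
        = p * ((u.choose i : ℝ) * p^i * q^(u-i) * f ((c+1)+i))
          + (u.choose (i+1) : ℝ) * p^(i+1) * q^(u-i) * f (c+(i+1)) := by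
    intro i _
    have h1 : (u+1).choose (i+1) = u.choose i + u.choose (i+1) := Nat.choose_succ_succ u i
    have h2 : u+1-(i+1) = u-i := by omega
    have h3 : (c+1)+i = c+(i+1) := by omega
    rw [h1, h2, h3]
    push_cast
    ring
  rw [Finset.sum_congr rfl hsplit, Finset.sum_add_distrib]
  have hA : ∑ i ∈ range (u+1), p * ((u.choose i : ℝ) * p^i * q^(u-i) * f ((c+1)+i))
      = p * binS p q f (c+1) u := by
    unfold binS
    rw [Finset.mul_sum]
  have hB : (∑ i ∈ range (u+1), (u.choose (i+1) : ℝ) * p^(i+1) * q^(u-i) * f (c+(i+1)))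
      + q^(u+1) * f c = q * binS p q f c u := by
    have hq2 : q * binS p q f c u
        = ∑ k ∈ range (u+1), (u.choose k : ℝ) * p^k * q^((u-k)+1) * f (c+k) := by
      unfold binS
      rw [Finset.mul_sum]
      refine Finset.sum_congr rfl fun k _ => ?_
      rw [pow_succ]
      ring
    set G : ℕ → ℝ := fun k => (u.choose k : ℝ) * p^k * q^((u-k)+1) * f (c+k) with hG
    have hsum2 : ∑ k ∈ range (u+2), G k = (∑ i ∈ range (u+1), G (i+1)) + G 0 :=
      Finset.sum_range_succ'  G (u+1)
    have hlast : G (u+1) = 0 := by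
      simp only [hG]
      rw [Nat.choose_eq_zero_of_lt (by omega)]
      push_cast; ring
    have hsum3 : ∑ k ∈ range (u+2), G k = ∑ k ∈ range (u+1), G k + G (u+1) :=
      Finset.sum_range_succ G (u+1)
    have hGi : ∀ i ∈ range (u+1), G (i+1)
        = (u.choose (i+1) : ℝ) * p^(i+1) * q^(u-i) * f (c+(i+1)) := by
      intro i hi
      simp only [hG]
      rcases Nat.lt_or_ge i u with h | h
      · have : (u-(i+1))+1 = u-i := by omega
        rw [this]
      · have hiu : i = u := by have := Finset.mem_range.1 hi; omega
        subst hiu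
        rw [Nat.choose_eq_zero_of_lt (by omega)]
        push_cast; ring
    have hG0 : G 0 = q^(u+1) * f c := by
      simp only [hG]
      simp
    rw [hq2, ← Finset.sum_congr rfl hGi]
    have hfin : (range (u+1)).sum G = (∑ i ∈ range (u+1), G (i+1)) + G 0 := by
      rw [hlast] at hsum3
      rw [hsum2] at hsum3
      linarith
    rw [hfin, hG0]
  unfold binS at hA hB
  linarith [hA, hB]

lemma binS_u_mono (p q : ℝ) (hp : 0 ≤ p) (hq : 0 ≤ q) (hpq : p + q = 1)
    (f : ℕ → ℝ) (hmono : Monotone f) (c : ℕ) :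
    Monotone (fun u => binS p q f c u) := by
  apply monotone_nat_of_le_succ
  intro u
  rw [binS_step]
  have h1 := binS_c_mono p q hp hq f hmono c u
  have h2 : p * binS p q f c u ≤ p * binS p q f (c+1) u :=
    mul_le_mul_of_nonneg_left h1 hp
  calc binS p q f c u = (p+q) * binS p q f c u := by rw [hpq]; ring
  _ = p * binS p q f c u + q * binS p q f c u := by ring
  _ ≤ p * binS p q f (c+1) u + q * binS p q f c u := by linarith

theorem binS_dom (p q : ℝ) (hp : 0 ≤ p) (hq : 0 ≤ q) (hpq : p + q = 1)
    (f : ℕ → ℝ) (hmono : Monotone f) (c u n : ℕ) (hun : u ≤ n) :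
    binS p q f c u ≤ binS p q f c n :=
  binS_u_mono p q hp hq hpq f hmono c hun

/-! ### Properties of the survival functions g_j -/

lemma T_preserve {n : ℕ} {f : ℕ → ℝ} (hmono : Monotone f) (h0 : ∀ x, 0 ≤ f x)
    (h1 : ∀ x, f x ≤ 1) (hz : f 0 = 0) :
    Monotone (Top n f) ∧ (∀ x, 0 ≤ Top n f x) ∧ (∀ x, Top n f x ≤ 1) ∧ Top n f 0 = 0 := by
  have hpos : ∀ a, 0 ≤ Top n f a := by
    intro a
    unfold Top
    split
    · exact Finset.sum_nonneg fun k _ => mul_nonneg (bb_nonneg n k) (h0 _)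
    · exact h0 a
  have hle1 : ∀ a, Top n f a ≤ 1 := by
    intro a
    unfold Top
    split
    · calc ∑ k ∈ range (n+1), bb n k * f (a-1+k)
          ≤ ∑ k ∈ range (n+1), bb n k * 1 :=
            Finset.sum_le_sum fun k _ => mul_le_mul_of_nonneg_left (h1 _) (bb_nonneg n k)
      _ = 1 := by simp only [mul_one]; exact bb_S0 n
    · exact h1 a
  refine ⟨?_, hpos, hle1, ?_⟩
  · intro a a' haa'
    unfold Top
    rcases Nat.lt_or_ge a 1 with h | h
    · rw [if_neg (by omega)]
      have h0' : a = 0 := by omega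
      subst h0'
      rw [hz]
      split
      · exact Finset.sum_nonneg fun k _ => mul_nonneg (bb_nonneg n k) (h0 _)
      · exact h0 a'
    · rw [if_pos h, if_pos (by omega)]
      exact Finset.sum_le_sum fun k _ =>
        mul_le_mul_of_nonneg_left (hmono (by omega)) (bb_nonneg n k)
  · unfold Top
    rw [if_neg (by omega)]
    exact hz

lemma g_props (n : ℕ) : ∀ j, Monotone ((Top n)^[j] chif)
    ∧ (∀ x, 0 ≤ (Top n)^[j] chif x) ∧ (∀ x, (Top n)^[j] chif x ≤ 1)
    ∧ (Top n)^[j] chif 0 = 0 := by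
  intro j
  induction j with
  | zero =>
    simp only [Function.iterate_zero, id_eq]
    refine ⟨?_, ?_, ?_, ?_⟩
    · intro a a' h
      unfold chif
      rcases Nat.lt_or_ge a 1 with h1 | h1
      · rw [if_neg (by omega)]
        split <;> norm_num
      · rw [if_pos h1, if_pos (by omega)]
    · intro x; unfold chif; split <;> norm_num
    · intro x; unfold chif; split <;> norm_num
    · unfold chif; rw [if_neg (by omega)]
  | succ j ih =>
    obtain ⟨h1, h2, h3, h4⟩ := ih
    have := T_preserve (n := n) h1 h2 h3 h4
    refine ⟨?_, ?_, ?_, ?_⟩ <;>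
      simp only [Function.iterate_succ_apply']
    · exact this.1
    · exact this.2.1
    · exact this.2.2.1
    · exact this.2.2.2


lemma allMeasurable {α : Type*} [MeasurableSpace α] [Countable α] [MeasurableSingletonClass α]
    (S : Set α) : MeasurableSet S := S.to_countable.measurableSet

lemma bern_prob {p : ℝ≥0∞} (hp : p ≤ 1) : IsProbabilityMeasure (bernoulliMeasure p) := by
  constructor
  unfold _root_.bernoulliMeasure
  rw [Measure.add_apply, Measure.smul_apply, Measure.smul_apply,
    Measure.dirac_apply' _ MeasurableSet.univ, Measure.dirac_apply' _ MeasurableSet.univ]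
  simp only [Set.mem_univ, Set.indicator_of_mem, Pi.one_apply, smul_eq_mul, mul_one]
  exact add_tsub_cancel_of_le hp

lemma bern_true (p : ℝ≥0∞) : bernoulliMeasure p {true} = p := by
  unfold _root_.bernoulliMeasure
  rw [Measure.add_apply, Measure.smul_apply, Measure.smul_apply,
    Measure.dirac_apply' _ (allMeasurable _), Measure.dirac_apply' _ (allMeasurable _)]
  simp

lemma bern_false (p : ℝ≥0∞) : bernoulliMeasure p {false} = 1 - p := by
  unfold _root_.bernoulliMeasure
  rw [Measure.add_apply, Measure.smul_apply, Measure.smul_apply,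
    Measure.dirac_apply' _ (allMeasurable _), Measure.dirac_apply' _ (allMeasurable _)]
  simp

lemma er_prob {n : ℕ} {p : ℝ≥0∞} (hp : p ≤ 1) : IsProbabilityMeasure (erdosRenyi n p) := by
  haveI : ∀ _e : Sym2 (Fin n), IsProbabilityMeasure (bernoulliMeasure p) :=
    fun _ => bern_prob hp
  unfold erdosRenyi
  infer_instance

/-- Independence for the product measure: if `S` depends only on coordinates in `D`
and `T` only on coordinates outside `D`, then they are independent. -/
lemma indep_lemma {n : ℕ} {p : ℝ≥0∞} (hp : p ≤ 1) (D : Set (Sym2 (Fin n)))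
    (S T : Set (Sym2 (Fin n) → Bool))
    (hS : ∀ ω ω', (∀ e ∈ D, ω e = ω' e) → ω ∈ S → ω' ∈ S)
    (hT : ∀ ω ω', (∀ e ∉ D, ω e = ω' e) → ω ∈ T → ω' ∈ T) :
    erdosRenyi n p (S ∩ T) = erdosRenyi n p S * erdosRenyi n p T := by
  classical
  haveI : IsProbabilityMeasure (bernoulliMeasure p) := bern_prob hp
  set q : Sym2 (Fin n) → Prop := fun e => e ∈ D with hq
  let E := MeasurableEquiv.piEquivPiSubtypeProd (fun _ : Sym2 (Fin n) => Bool) q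
  have mp : MeasurePreserving E (erdosRenyi n p)
      ((Measure.pi fun _ : Subtype q => bernoulliMeasure p).prod
        (Measure.pi fun _ : {e // ¬ q e} => bernoulliMeasure p)) :=
    measurePreserving_piEquivPiSubtypeProd (fun _ : Sym2 (Fin n) => bernoulliMeasure p) q
  set ν₁ := Measure.pi fun _ : Subtype q => bernoulliMeasure p with hν₁
  set ν₂ := Measure.pi fun _ : {e // ¬ q e} => bernoulliMeasure p with hν₂
  haveI : IsProbabilityMeasure ν₁ := by rw [hν₁]; infer_instance
  haveI : IsProbabilityMeasure ν₂ := by rw [hν₂]; infer_instance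
  set S₁ : Set (∀ _e : Subtype q, Bool) := {σ | E.symm (σ, fun _ => false) ∈ S} with hS₁
  set T₂ : Set (∀ _e : {e // ¬ q e}, Bool) := {τ | E.symm ((fun _ => false), τ) ∈ T} with hT₂
  have hSpre : E ⁻¹' (S₁ ×ˢ (Set.univ : Set (∀ _e : {e // ¬ q e}, Bool))) = S := by
    ext ω
    simp only [Set.mem_preimage, Set.mem_prod, Set.mem_univ, and_true, hS₁, Set.mem_setOf_eq]
    have hagree : ∀ e ∈ D, (E.symm ((E ω).1, fun _ => false)) e = ω e := by
      intro e he
      have h1 : (E.symm ((E ω).1, fun _ => false)) e = if h : q e then (E ω).1 ⟨e, h⟩ else false := rfl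
      rw [h1, dif_pos (by exact he)]
      rfl
    constructor
    · intro h
      exact hS _ _ (fun e he => (hagree e he)) h
    · intro h
      exact hS _ _ (fun e he => (hagree e he).symm) h
  have hTpre : E ⁻¹' ((Set.univ : Set (∀ _e : Subtype q, Bool)) ×ˢ T₂) = T := by
    ext ω
    simp only [Set.mem_preimage, Set.mem_prod, Set.mem_univ, true_and, hT₂, Set.mem_setOf_eq]
    have hagree : ∀ e ∉ D, (E.symm ((fun _ => false), (E ω).2)) e = ω e := by
      intro e he
      have h1 : (E.symm ((fun _ => false), (E ω).2)) e
          = if h : q e then false else (E ω).2 ⟨e, h⟩ := rfl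
      rw [h1, dif_neg (by exact he)]
      rfl
    constructor
    · intro h
      exact hT _ _ (fun e he => (hagree e he)) h
    · intro h
      exact hT _ _ (fun e he => (hagree e he).symm) h
  have key : ∀ (X : Set ((∀ _e : Subtype q, Bool) × (∀ _e : {e // ¬ q e}, Bool))),
      erdosRenyi n p (E ⁻¹' X) = (ν₁.prod ν₂) X := by
    intro X
    rw [← mp.map_eq]
    rw [Measure.map_apply E.measurable (allMeasurable X)]
  have h1 : S ∩ T = E ⁻¹' (S₁ ×ˢ T₂) := by
    rw [← hSpre, ← hTpre, ← Set.preimage_inter, Set.prod_inter_prod, Set.inter_univ,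
      Set.univ_inter]
  rw [h1, key, ← hSpre, ← hTpre, key, key, Measure.prod_prod, Measure.prod_prod,
    Measure.prod_prod]
  simp [measure_univ]
lemma coord_meas {n : ℕ} {p : ℝ≥0∞} (hp : p ≤ 1) (e0 : Sym2 (Fin n)) (v : Bool) :
    erdosRenyi n p {ω | ω e0 = v} = bernoulliMeasure p {v} := by
  classical
  haveI : IsProbabilityMeasure (bernoulliMeasure p) := bern_prob hp
  have hset : {ω : Sym2 (Fin n) → Bool | ω e0 = v}
      = Set.univ.pi (fun e => if e = e0 then ({v} : Set Bool) else Set.univ) := by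
    ext ω
    simp only [Set.mem_setOf_eq, Set.mem_univ_pi]
    constructor
    · intro h e
      by_cases he : e = e0
      · subst he; rw [if_pos rfl]; exact h
      · rw [if_neg he]; trivial
    · intro h
      have := h e0
      rwa [if_pos rfl] at this
  rw [hset]
  unfold erdosRenyi
  rw [Measure.pi_pi]
  have hfac : ∀ e : Sym2 (Fin n),
      bernoulliMeasure p (if e = e0 then ({v} : Set Bool) else Set.univ)
        = if e = e0 then bernoulliMeasure p {v} else 1 := by
    intro e
    split
    · rfl
    · exact measure_univ
  rw [Finset.prod_congr rfl (fun e _ => hfac e)]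
  rw [Finset.prod_ite_eq' Finset.univ e0 (fun _ => bernoulliMeasure p {v})]
  simp

lemma sym2_ne {n : ℕ} {w u u0 : Fin n} (hww : w ≠ u) (huu : u ≠ u0) (hwu0 : w ≠ u0) :
    s(w, u) ≠ s(w, u0) := by
  intro h
  rw [Sym2.eq_iff] at h
  rcases h with ⟨_, h2⟩ | ⟨h1, _⟩
  · exact huu h2
  · exact hwu0 h1

lemma cyl_meas {n : ℕ} {p : ℝ≥0∞} (hp : p ≤ 1) (w : Fin n) :
    ∀ (U N : Finset (Fin n)), w ∉ U → N ⊆ U →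
    erdosRenyi n p {ω | ∀ u ∈ U, ω s(w,u) = decide (u ∈ N)}
      = p ^ N.card * (1-p) ^ (U.card - N.card) := by
  classical
  intro U
  induction U using Finset.induction_on with
  | empty =>
    intro N _ hN
    have hN0 : N = ∅ := Finset.subset_empty.mp hN
    subst hN0
    have : {ω : Sym2 (Fin n) → Bool | ∀ u ∈ (∅ : Finset (Fin n)), ω s(w,u) = decide (u ∈ (∅ : Finset (Fin n)))} = Set.univ := by
      ext ω; simp
    rw [this]
    haveI : IsProbabilityMeasure (erdosRenyi n p) := er_prob hp
    simp [measure_univ]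
  | @insert u0 U' hu0 ih =>
    intro N hw hN
    have hwu0 : w ≠ u0 := fun h => hw (h ▸ Finset.mem_insert_self u0 U')
    have hwU' : w ∉ U' := fun h => hw (Finset.mem_insert_of_mem h)
    set N' := N.erase u0 with hN'
    have hN'sub : N' ⊆ U' := by
      intro x hx
      rw [hN', Finset.mem_erase] at hx
      have := hN hx.2
      rw [Finset.mem_insert] at this
      tauto
    have hsplit : {ω : Sym2 (Fin n) → Bool | ∀ u ∈ insert u0 U', ω s(w,u) = decide (u ∈ N)}
        = {ω | ω s(w,u0) = decide (u0 ∈ N)}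
          ∩ {ω | ∀ u ∈ U', ω s(w,u) = decide (u ∈ N')} := by
      ext ω
      simp only [Set.mem_setOf_eq, Set.mem_inter_iff, Finset.mem_insert]
      constructor
      · intro h
        refine ⟨h u0 (Or.inl rfl), fun u hu => ?_⟩
        have huu0 : u ≠ u0 := fun he => hu0 (he ▸ hu)
        rw [h u (Or.inr hu)]
        congr 1
        rw [hN', Finset.mem_erase]
        simp [huu0]
      · rintro ⟨h1, h2⟩ u hu
        rcases hu with rfl | hu
        · exact h1
        · have huu0 : u ≠ u0 := fun he => hu0 (he ▸ hu)
          rw [h2 u hu]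
          congr 1
          rw [hN', Finset.mem_erase]
          simp [huu0]
    have hindep := indep_lemma hp ({s(w,u0)} : Set (Sym2 (Fin n)))
      {ω | ω s(w,u0) = decide (u0 ∈ N)}
      {ω | ∀ u ∈ U', ω s(w,u) = decide (u ∈ N')}
      (by
        intro ω ω' hag h
        have := hag s(w,u0) rfl
        simp only [Set.mem_setOf_eq] at h ⊢
        rw [← this]; exact h)
      (by
        intro ω ω' hag h
        simp only [Set.mem_setOf_eq] at h ⊢
        intro u hu
        have hne : s(w,u) ≠ s(w,u0) := by
          apply sym2_ne
          · intro he; exact hwU' (he ▸ hu)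
          · intro he; exact hu0 (he ▸ hu)
          · exact hwu0
        rw [← hag s(w,u) (by simpa using hne)]
        exact h u hu)
    rw [hsplit, hindep, ih N' hwU' hN'sub]
    have hcoord := coord_meas hp (s(w,u0)) (decide (u0 ∈ N))
    rw [hcoord]
    by_cases hm : u0 ∈ N
    · have hb : decide (u0 ∈ N) = true := by simp [hm]
      rw [hb, bern_true]
      have hcardN : N.card = N'.card + 1 := by
        rw [hN']
        rw [Finset.card_erase_of_mem hm]
        have : 1 ≤ N.card := Finset.card_pos.mpr ⟨u0, hm⟩
        omega
      have hcardU : (insert u0 U').card = U'.card + 1 := Finset.card_insert_of_notMem hu0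
      have hNle : N'.card ≤ U'.card := Finset.card_le_card hN'sub
      rw [hcardN, hcardU]
      have hex : U'.card + 1 - (N'.card + 1) = U'.card - N'.card := by omega
      rw [hex, pow_succ]
      ring
    · have hb : decide (u0 ∈ N) = false := by simp [hm]
      rw [hb, bern_false]
      have hNN' : N' = N := Finset.erase_eq_of_notMem hm
      have hNsub' : N ⊆ U' := by
        intro x hx
        have := hN hx
        rw [Finset.mem_insert] at this
        rcases this with rfl | h
        · exact absurd hx hm
        · exact h
      have hNle : N.card ≤ U'.card := Finset.card_le_card hNsub'
      have hcardU : (insert u0 U').card = U'.card + 1 := Finset.card_insert_of_notMem hu0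
      rw [hNN', hcardU]
      have hex : U'.card + 1 - N.card = (U'.card - N.card) + 1 := by omega
      rw [hex, pow_succ]
      ring

def Surv {n : ℕ} (ω : Sym2 (Fin n) → Bool) : ℕ → Finset (Fin n) → Finset (Fin n) → Prop
  | 0, A, _ => A.Nonempty
  | (j+1), A, U =>
    if h : A.Nonempty then
      Surv ω j ((A.erase (A.min' h)) ∪ (U.filter (fun u => ω s(A.min' h, u) = true)))
        (U \ (U.filter (fun u => ω s(A.min' h, u) = true)))
    else False

lemma surv_dep {n : ℕ} : ∀ (j : ℕ) (A U : Finset (Fin n)) (ω ω' : Sym2 (Fin n) → Bool),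
    (∀ x y : Fin n, x ∈ A ∪ U → y ∈ A ∪ U → ω s(x,y) = ω' s(x,y)) →
    (Surv ω j A U ↔ Surv ω' j A U) := by
  intro j
  induction j with
  | zero => intro A U ω ω' _; rfl
  | succ j ih =>
    intro A U ω ω' hag
    by_cases hA : A.Nonempty
    · set w := A.min' hA with hw
      have hwA : w ∈ A := A.min'_mem hA
      have hNN : U.filter (fun u => ω s(w, u) = true)
          = U.filter (fun u => ω' s(w, u) = true) := by
        apply Finset.filter_congr
        intro u hu
        rw [hag w u (Finset.mem_union_left _ hwA) (Finset.mem_union_right _ hu)]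
      show (if h : A.Nonempty then _ else False) ↔ (if h : A.Nonempty then _ else False)
      rw [dif_pos hA, dif_pos hA]
      rw [← hw, ← hNN]
      apply ih
      intro x y hx hy
      apply hag
      · rcases Finset.mem_union.1 hx with h | h
        · rcases Finset.mem_union.1 h with h2 | h2
          · exact Finset.mem_union_left _ (Finset.erase_subset _ _ h2)
          · exact Finset.mem_union_right _ (Finset.filter_subset _ _ h2)
        · exact Finset.mem_union_right _ (Finset.sdiff_subset h)
      · rcases Finset.mem_union.1 hy with h | h
        · rcases Finset.mem_union.1 h with h2 | h2
          · exact Finset.mem_union_left _ (Finset.erase_subset _ _ h2)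
          · exact Finset.mem_union_right _ (Finset.filter_subset _ _ h2)
        · exact Finset.mem_union_right _ (Finset.sdiff_subset h)
    · show (if h : A.Nonempty then _ else False) ↔ (if h : A.Nonempty then _ else False)
      rw [dif_neg hA, dif_neg hA]

theorem surv_measure (n : ℕ) (hn : 1000 ≤ n) :
    ∀ (j : ℕ) (A U : Finset (Fin n)), Disjoint A U →
    erdosRenyi n ((n : ℝ≥0∞))⁻¹ {ω | Surv ω j A U}
      ≤ ENNReal.ofReal ((Top n)^[j] chif A.card) := by
  classical
  have hn1 : 1 ≤ n := by omega
  have hnR : (0:ℝ) < (n:ℝ) := by exact_mod_cast hn1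
  set pE : ℝ≥0∞ := ((n : ℝ≥0∞))⁻¹ with hpE
  set pR : ℝ := ((n:ℝ))⁻¹ with hpR
  set qR : ℝ := 1 - pR with hqR
  have hpR0 : 0 ≤ pR := by positivity
  have hpR1 : pR ≤ 1 := by
    rw [hpR, inv_le_one_iff₀]
    right
    exact_mod_cast hn1
  have hqR0 : 0 ≤ qR := by rw [hqR]; linarith
  have hpq : pR + qR = 1 := by rw [hqR]; ring
  have hpE1 : pE ≤ 1 := by
    rw [hpE]
    apply ENNReal.inv_le_one.mpr
    exact_mod_cast hn1
  haveI : IsProbabilityMeasure (erdosRenyi n pE) := er_prob hpE1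
  have hpEof : pE = ENNReal.ofReal pR := by
    rw [hpE, hpR, ENNReal.ofReal_inv_of_pos hnR, ENNReal.ofReal_natCast]
  have hqEof : 1 - pE = ENNReal.ofReal qR := by
    rw [hqR, ENNReal.ofReal_sub _ hpR0, ENNReal.ofReal_one, hpEof]
  intro j
  induction j with
  | zero =>
    intro A U _hAU
    by_cases hA : A.Nonempty
    · have hset : {ω : Sym2 (Fin n) → Bool | Surv ω 0 A U} = Set.univ := by
        ext ω; simp [Surv, hA]
      rw [hset, measure_univ]
      have hcard : 1 ≤ A.card := Finset.card_pos.mpr hA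
      have : (Top n)^[0] chif A.card = 1 := by
        simp only [Function.iterate_zero, id_eq]
        unfold chif
        rw [if_pos hcard]
      rw [this, ENNReal.ofReal_one]
    · have hset : {ω : Sym2 (Fin n) → Bool | Surv ω 0 A U} = ∅ := by
        ext ω; simp [Surv, hA]
      rw [hset, measure_empty]
      exact zero_le
  | succ j ih =>
    intro A U hAU
    by_cases hA : A.Nonempty
    case neg =>
      have hset : {ω : Sym2 (Fin n) → Bool | Surv ω (j+1) A U} = ∅ := by
        ext ω
        simp only [Set.mem_setOf_eq, Set.mem_empty_iff_false, iff_false]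
        show ¬ (if h : A.Nonempty then _ else False)
        rw [dif_neg hA]
        exact not_false
      rw [hset, measure_empty]
      exact zero_le
    case pos =>
    set w := A.min' hA with hw
    have hwA : w ∈ A := A.min'_mem hA
    have hwU : w ∉ U := fun h => (Finset.disjoint_left.1 hAU) hwA h
    have hacard : 1 ≤ A.card := Finset.card_pos.mpr hA
    set u := U.card with hu
    set a := A.card with ha
    -- the next-state data
    set Anext : Finset (Fin n) → Finset (Fin n) := fun N => (A.erase w) ∪ N with hAnext
    set CylSet : Finset (Fin n) → Set (Sym2 (Fin n) → Bool) :=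
      fun N => {ω | ∀ x ∈ U, ω s(w,x) = decide (x ∈ N)} with hCyl
    set NextSet : Finset (Fin n) → Set (Sym2 (Fin n) → Bool) :=
      fun N => {ω | Surv ω j (Anext N) (U \ N)} with hNext
    have hsub : {ω : Sym2 (Fin n) → Bool | Surv ω (j+1) A U}
        ⊆ ⋃ N ∈ U.powerset, (CylSet N ∩ NextSet N) := by
      intro ω hω
      simp only [Set.mem_setOf_eq] at hω
      have hω' : Surv ω j ((A.erase w) ∪ (U.filter (fun x => ω s(w, x) = true)))
          (U \ (U.filter (fun x => ω s(w, x) = true))) := by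
        have : Surv ω (j+1) A U = if h : A.Nonempty then
            Surv ω j ((A.erase (A.min' h)) ∪ (U.filter (fun x => ω s(A.min' h, x) = true)))
              (U \ (U.filter (fun x => ω s(A.min' h, x) = true))) else False := rfl
        rw [this, dif_pos hA] at hω
        exact hω
      set N0 := U.filter (fun x => ω s(w, x) = true) with hN0
      simp only [Set.mem_iUnion]
      refine ⟨N0, Finset.mem_powerset.2 (Finset.filter_subset _ _), ?_, ?_⟩
      · simp only [hCyl, Set.mem_setOf_eq]
        intro x hx
        by_cases hb : ω s(w,x) = true
        · rw [hb]
          symm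
          simp only [hN0, decide_eq_true_eq, Finset.mem_filter]
          exact ⟨hx, hb⟩
        · have hb' : ω s(w,x) = false := by
            cases h : ω s(w,x)
            · rfl
            · exact absurd h hb
          rw [hb']
          symm
          simp only [decide_eq_false_iff_not, hN0, Finset.mem_filter]
          tauto
      · simp only [hNext, Set.mem_setOf_eq, hAnext]
        exact hω'
    calc erdosRenyi n pE {ω | Surv ω (j+1) A U}
        ≤ erdosRenyi n pE (⋃ N ∈ U.powerset, (CylSet N ∩ NextSet N)) := measure_mono hsub
    _ ≤ ∑ N ∈ U.powerset, erdosRenyi n pE (CylSet N ∩ NextSet N) :=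
        measure_biUnion_finset_le _ _
    _ ≤ ∑ N ∈ U.powerset,
          ENNReal.ofReal ((U.card.choose N.card : ℝ)⁻¹ * 0 + pR^(N.card) * qR^(u - N.card)
            * (Top n)^[j] chif (a - 1 + N.card)) := by
        apply Finset.sum_le_sum
        intro N hN
        have hNU : N ⊆ U := Finset.mem_powerset.1 hN
        -- independence
        have hD : erdosRenyi n pE (CylSet N ∩ NextSet N)
            = erdosRenyi n pE (CylSet N) * erdosRenyi n pE (NextSet N) := by
          apply indep_lemma hpE1 {e | ∃ x ∈ U, s(w,x) = e}
          · intro ω ω' hag hmem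
            simp only [hCyl, Set.mem_setOf_eq] at hmem ⊢
            intro x hx
            rw [← hag s(w,x) ⟨x, hx, rfl⟩]
            exact hmem x hx
          · intro ω ω' hag hmem
            simp only [hNext, Set.mem_setOf_eq] at hmem ⊢
            rw [← surv_dep j _ _ ω ω' ?_]
            · exact hmem
            · intro x y hx hy
              apply hag
              simp only [Set.mem_setOf_eq, not_exists]
              rintro z ⟨hz, hzeq⟩
              -- s(w,z) = s(x,y) with z ∈ U, x,y ∈ Anext N ∪ (U \ N), w not in the latter
              have hwnot : ∀ t : Fin n, t ∈ Anext N ∪ (U \ N) → t ≠ w := by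
                intro t ht
                rcases Finset.mem_union.1 ht with h | h
                · rcases Finset.mem_union.1 h with h2 | h2
                  · exact Finset.ne_of_mem_erase h2
                  · intro he; exact hwU (hNU (he ▸ h2))
                · intro he; exact hwU (Finset.sdiff_subset (he ▸ h))
              rw [Sym2.eq_iff] at hzeq
              rcases hzeq with ⟨h1, _⟩ | ⟨h1, _⟩
              · exact (hwnot x hx) h1.symm
              · exact (hwnot y hy) h1.symm
        rw [hD]
        have hCylval : erdosRenyi n pE (CylSet N)
            = pE ^ N.card * (1-pE) ^ (U.card - N.card) := cyl_meas hpE1 w U N hwU hNU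
        have hNextval : erdosRenyi n pE (NextSet N)
            ≤ ENNReal.ofReal ((Top n)^[j] chif (a - 1 + N.card)) := by
          have hdisj : Disjoint (Anext N) (U \ N) := by
            apply Finset.disjoint_union_left.2
            constructor
            · exact Finset.disjoint_of_subset_left (Finset.erase_subset _ _)
                (Finset.disjoint_of_subset_right Finset.sdiff_subset hAU)
            · exact Finset.disjoint_sdiff
          have hcard : (Anext N).card = a - 1 + N.card := by
            rw [hAnext]
            simp only
            rw [Finset.card_union_of_disjoint, Finset.card_erase_of_mem hwA]
            exact Finset.disjoint_of_subset_left (Finset.erase_subset _ _)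
              (Finset.disjoint_of_subset_right hNU hAU)
          have := ih (Anext N) (U \ N) hdisj
          rwa [hcard] at this
        calc erdosRenyi n pE (CylSet N) * erdosRenyi n pE (NextSet N)
            ≤ (pE ^ N.card * (1-pE) ^ (U.card - N.card))
              * ENNReal.ofReal ((Top n)^[j] chif (a - 1 + N.card)) := by
              rw [hCylval]
              exact mul_le_mul_right hNextval _
        _ = ENNReal.ofReal ((U.card.choose N.card : ℝ)⁻¹ * 0 + pR^(N.card) * qR^(u - N.card)
              * (Top n)^[j] chif (a - 1 + N.card)) := by
              rw [hqEof, hpEof, ← ENNReal.ofReal_pow hpR0, ← ENNReal.ofReal_pow hqR0,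
                ← ENNReal.ofReal_mul (by positivity), ← ENNReal.ofReal_mul (by positivity)]
              congr 1
              ring
    _ ≤ ENNReal.ofReal ((Top n)^[j+1] chif A.card) := by
        rw [← ENNReal.ofReal_sum_of_nonneg]
        · apply ENNReal.ofReal_le_ofReal
          have hg := g_props n j
          -- group by cardinality
          have hgroup : ∑ N ∈ U.powerset, ((U.card.choose N.card : ℝ)⁻¹ * 0
                + pR^(N.card) * qR^(u - N.card) * (Top n)^[j] chif (a - 1 + N.card))
              = ∑ k ∈ range (u+1), (u.choose k : ℝ) * pR^k * qR^(u-k)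
                  * (Top n)^[j] chif ((a-1) + k) := by
            rw [Finset.sum_powerset]
            refine Finset.sum_congr rfl fun k hk => ?_
            have hconst : ∀ N ∈ Finset.powersetCard k U,
                ((U.card.choose N.card : ℝ)⁻¹ * 0
                  + pR^(N.card) * qR^(u - N.card) * (Top n)^[j] chif (a - 1 + N.card))
                = pR^k * qR^(u-k) * (Top n)^[j] chif ((a-1) + k) := by
              intro N hNk
              have hcard := (Finset.mem_powersetCard.1 hNk).2
              rw [hcard]
              ring
            rw [Finset.sum_congr rfl hconst, Finset.sum_const, Finset.card_powersetCard,
              nsmul_eq_mul]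
            rw [← hu]
            ring
          rw [hgroup]
          have hdom : ∑ k ∈ range (u+1), (u.choose k : ℝ) * pR^k * qR^(u-k)
                  * (Top n)^[j] chif ((a-1) + k)
              ≤ ∑ k ∈ range (n+1), (n.choose k : ℝ) * pR^k * qR^(n-k)
                  * (Top n)^[j] chif ((a-1) + k) := by
            have hun : u ≤ n := by
              rw [hu]
              have h1 : U.card ≤ (Finset.univ : Finset (Fin n)).card :=
                Finset.card_le_card (Finset.subset_univ U)
              simpa using h1
            have := binS_dom pR qR hpR0 hqR0 hpq ((Top n)^[j] chif) hg.1 (a-1) u n hun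
            unfold binS at this
            exact this
          apply le_trans hdom
          have hTop : ∑ k ∈ range (n+1), (n.choose k : ℝ) * pR^k * qR^(n-k)
                  * (Top n)^[j] chif ((a-1) + k)
              = (Top n)^[j+1] chif a := by
            rw [Function.iterate_succ_apply']
            unfold Top
            rw [if_pos hacard]
            refine (Finset.sum_congr rfl fun k _ => ?_).symm
            unfold bb
            rw [← hpR, ← hqR]
          rw [hTop, ← ha]
        · intro N _
          have hg := g_props n j
          have := hg.2.1 (a - 1 + N.card)
          positivity

section GraphSide
open Classical in
noncomputable def CFin {n : ℕ} (ω : Sym2 (Fin n) → Bool) (v : Fin n) : Finset (Fin n) :=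
  Finset.univ.filter (fun x => (graphOf ω).Reachable v x)

lemma mem_CFin {n : ℕ} (ω : Sym2 (Fin n) → Bool) (v x : Fin n) :
    x ∈ CFin ω v ↔ (graphOf ω).Reachable v x := by
  unfold CFin
  simp

lemma compSize_eq {n : ℕ} (ω : Sym2 (Fin n) → Bool) (v : Fin n) :
    compSize ω v = (CFin ω v).card := by
  classical
  unfold compSize
  rw [Nat.card_eq_card_toFinset]
  congr 1
  ext x
  rw [Set.mem_toFinset, mem_CFin]
  rfl

lemma reach_subset {n : ℕ} (ω : Sym2 (Fin n) → Bool) (v : Fin n) (E : Finset (Fin n))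
    (hv : v ∈ E) (hcl : ∀ x ∈ E, ∀ y, (graphOf ω).Adj x y → y ∈ E) :
    ∀ x, (graphOf ω).Reachable v x → x ∈ E := by
  have main : ∀ (y z : Fin n), (graphOf ω).Walk y z → y ∈ E → z ∈ E := by
    intro y z pw
    induction pw with
    | nil => exact id
    | cons hadj q ihq =>
      intro hy
      exact ihq (hcl _ hy _ hadj)
  intro x hr
  obtain ⟨pw⟩ := hr
  exact main v x pw hv

lemma adj_of_bit {n : ℕ} {ω : Sym2 (Fin n) → Bool} {x y : Fin n} (hxy : x ≠ y)
    (hb : ω s(x,y) = true) : (graphOf ω).Adj x y := by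
  unfold graphOf
  rw [SimpleGraph.fromRel_adj]
  exact ⟨hxy, Or.inl hb⟩

lemma bit_of_adj {n : ℕ} {ω : Sym2 (Fin n) → Bool} {x y : Fin n}
    (h : (graphOf ω).Adj x y) : ω s(x,y) = true := by
  unfold graphOf at h
  rw [SimpleGraph.fromRel_adj] at h
  rcases h.2 with h2 | h2
  · exact h2
  · rwa [Sym2.eq_swap] at h2

set_option maxHeartbeats 1000000 in
lemma die_lemma {n : ℕ} (ω : Sym2 (Fin n) → Bool) (v : Fin n) :
    ∀ (j : ℕ) (E A U : Finset (Fin n)),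
    Disjoint E A → Disjoint E U → Disjoint A U → (∀ x, x ∈ E ∪ A ∪ U) →
    v ∈ E ∪ A → (∀ x ∈ E ∪ A, (graphOf ω).Reachable v x) →
    (∀ x ∈ E, ∀ y, (graphOf ω).Adj x y → y ∈ E ∪ A) →
    ¬ Surv ω j A U →
    (CFin ω v).card ≤ E.card + j := by
  intro j
  induction j with
  | zero =>
    intro E A U hEA hEU hAU hcov hv hreach hcl hns
    have hA : A = ∅ := Finset.not_nonempty_iff_eq_empty.mp (by exact hns)
    subst hA
    simp only [Finset.union_empty] at hv hreach hcl
    have hsub : CFin ω v ⊆ E := by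
      intro x hx
      exact reach_subset ω v E hv hcl x ((mem_CFin ω v x).1 hx)
    have := Finset.card_le_card hsub
    omega
  | succ j ih =>
    intro E A U hEA hEU hAU hcov hv hreach hcl hns
    by_cases hA : A.Nonempty
    case neg =>
      have hA0 : A = ∅ := Finset.not_nonempty_iff_eq_empty.mp hA
      subst hA0
      simp only [Finset.union_empty] at hv hreach hcl
      have hsub : CFin ω v ⊆ E := by
        intro x hx
        exact reach_subset ω v E hv hcl x ((mem_CFin ω v x).1 hx)
      have := Finset.card_le_card hsub
      omega
    case pos =>
    set w := A.min' hA with hw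
    have hwA : w ∈ A := A.min'_mem hA
    have hwU : w ∉ U := fun h => (Finset.disjoint_left.1 hAU) hwA h
    have hwE : w ∉ E := fun h => (Finset.disjoint_left.1 hEA) h hwA
    set N := U.filter (fun x => ω s(w, x) = true) with hN
    have hNU : N ⊆ U := Finset.filter_subset _ _
    have hns' : ¬ Surv ω j ((A.erase w) ∪ N) (U \ N) := by
      intro hcon
      apply hns
      show (if h : A.Nonempty then _ else False)
      rw [dif_pos hA]
      exact hcon
    have hwnotN : w ∉ N := fun h => hwU (hNU h)
    -- apply IH with E' = insert w E
    have hkey := ih (insert w E) ((A.erase w) ∪ N) (U \ N) ?_ ?_ ?_ ?_ ?_ ?_ ?_ hns'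
    · rw [Finset.card_insert_of_notMem hwE] at hkey
      omega
    · -- Disjoint (insert w E) (erase ∪ N)
      rw [Finset.disjoint_union_right]
      constructor
      · rw [Finset.disjoint_insert_left]
        exact ⟨Finset.notMem_erase w A,
          Finset.disjoint_of_subset_right (Finset.erase_subset _ _) hEA⟩
      · rw [Finset.disjoint_insert_left]
        exact ⟨hwnotN, Finset.disjoint_of_subset_right hNU hEU⟩
    · -- Disjoint (insert w E) (U \ N)
      rw [Finset.disjoint_insert_left]
      exact ⟨fun h => hwU (Finset.sdiff_subset h),
        Finset.disjoint_of_subset_right Finset.sdiff_subset hEU⟩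
    · -- Disjoint (erase ∪ N) (U \ N)
      rw [Finset.disjoint_union_left]
      exact ⟨Finset.disjoint_of_subset_left (Finset.erase_subset _ _)
          (Finset.disjoint_of_subset_right Finset.sdiff_subset hAU),
        Finset.disjoint_sdiff⟩
    · -- covering
      intro x
      have := hcov x
      simp only [Finset.mem_union, Finset.mem_insert, Finset.mem_erase, Finset.mem_sdiff] at *
      by_cases hxw : x = w
      · tauto
      · by_cases hxN : x ∈ N
        · tauto
        · tauto
    · -- v ∈ E' ∪ A'
      simp only [Finset.mem_union, Finset.mem_insert, Finset.mem_erase] at hv ⊢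
      by_cases hvw : v = w
      · tauto
      · tauto
    · -- reachability
      intro x hx
      simp only [Finset.mem_union, Finset.mem_insert, Finset.mem_erase] at hx
      rcases hx with (rfl | hxE) | (⟨_, hxA⟩ | hxN)
      · exact hreach w (Finset.mem_union_right _ hwA)
      · exact hreach x (Finset.mem_union_left _ hxE)
      · exact hreach x (Finset.mem_union_right _ hxA)
      · -- x ∈ N : adjacent to w
        have hxU : x ∈ U := hNU hxN
        have hwx : w ≠ x := fun h => hwU (h ▸ hxU)
        have hbit : ω s(w,x) = true := (Finset.mem_filter.1 hxN).2
        exact (hreach w (Finset.mem_union_right _ hwA)).trans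
          (adj_of_bit hwx hbit).reachable
    · -- closure
      intro x hx y hadj
      simp only [Finset.mem_insert] at hx
      rcases hx with rfl | hxE
      · -- x = w
        have hy := hcov y
        simp only [Finset.mem_union] at hy ⊢
        simp only [Finset.mem_insert, Finset.mem_erase]
        rcases hy with (hyE | hyA) | hyU
        · tauto
        · have hyw : y ≠ w := fun h => (graphOf ω).irrefl (h ▸ hadj)
          tauto
        · have hxy : w ≠ y := (graphOf ω).ne_of_adj hadj
          have hbit : ω s(w,y) = true := bit_of_adj hadj
          have hyN : y ∈ N := by
            rw [Finset.mem_filter]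
            exact ⟨hyU, hbit⟩
          tauto
      · have := hcl x hxE y hadj
        simp only [Finset.mem_union, Finset.mem_insert, Finset.mem_erase] at this ⊢
        by_cases hyw : y = w
        · tauto
        · tauto

lemma surv_of_large {n : ℕ} (ω : Sym2 (Fin n) → Bool) (v : Fin n) (m : ℕ) (hm : 1 ≤ m)
    (hsize : m ≤ compSize ω v) : Surv ω (m-1) {v} (Finset.univ.erase v) := by
  by_contra hns
  have h := die_lemma ω v (m-1) ∅ {v} (Finset.univ.erase v) ?_ ?_ ?_ ?_ ?_ ?_ ?_ hns
  · rw [compSize_eq] at hsize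
    simp only [Finset.card_empty] at h
    omega
  · exact Finset.disjoint_empty_left _
  · exact Finset.disjoint_empty_left _
  · rw [Finset.disjoint_singleton_left]
    exact Finset.notMem_erase v _
  · intro x
    simp only [Finset.empty_union, Finset.mem_union, Finset.mem_singleton, Finset.mem_erase]
    by_cases hxv : x = v
    · tauto
    · simp [hxv]
  · simp
  · intro x hx
    simp only [Finset.empty_union, Finset.mem_union, Finset.mem_singleton,
      Finset.notMem_empty, false_or] at hx
    subst hx
    exact SimpleGraph.Reachable.refl x
  · intro x hx
    simp at hx

lemma comp_congr {n : ℕ} (ω : Sym2 (Fin n) → Bool) (v x : Fin n)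
    (h : (graphOf ω).Reachable v x) : CFin ω x = CFin ω v := by
  ext y
  rw [mem_CFin, mem_CFin]
  constructor
  · intro h2; exact h.trans h2
  · intro h2; exact h.symm.trans h2

lemma count_lemma {n : ℕ} (m : ℕ) (hn : 1 ≤ n) (ω : Sym2 (Fin n) → Bool)
    (hm : m ≤ maxCompSize n ω) :
    m ≤ (Finset.univ.filter (fun v : Fin n => m ≤ compSize ω v)).card := by
  classical
  have hne : (Finset.univ : Finset (Fin n)).Nonempty := by
    rw [Finset.univ_nonempty_iff]
    exact Fin.pos_iff_nonempty.mp (by omega)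
  obtain ⟨v₀, _, hv₀⟩ := Finset.exists_mem_eq_sup Finset.univ hne
    (fun v : Fin n => compSize ω v)
  unfold maxCompSize at hm
  rw [hv₀] at hm
  have hsub : CFin ω v₀ ⊆ Finset.univ.filter (fun v : Fin n => m ≤ compSize ω v) := by
    intro x hx
    rw [Finset.mem_filter]
    refine ⟨Finset.mem_univ x, ?_⟩
    rw [compSize_eq, comp_congr ω v₀ x ((mem_CFin ω v₀ x).1 hx), ← compSize_eq]
    exact hm
  calc m ≤ compSize ω v₀ := hm
  _ = (CFin ω v₀).card := compSize_eq ω v₀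
  _ ≤ _ := Finset.card_le_card hsub

end GraphSide

lemma moment_lemma (n m : ℕ) (hn1 : 1 ≤ n) {p : ℝ≥0∞} :
    (m : ℝ≥0∞) * erdosRenyi n p {ω | m ≤ maxCompSize n ω}
      ≤ ∑ v : Fin n, erdosRenyi n p {ω | m ≤ compSize ω v} := by
  classical
  set μ := erdosRenyi n p with hμ
  have h1 : (m:ℝ≥0∞) * μ {ω | m ≤ maxCompSize n ω}
      = ∫⁻ ω, (m:ℝ≥0∞) * ({ω : Sym2 (Fin n) → Bool | m ≤ maxCompSize n ω}).indicator
          (1 : (Sym2 (Fin n) → Bool) → ℝ≥0∞) ω ∂μ := by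
    rw [lintegral_const_mul (m:ℝ≥0∞) (Measurable.indicator measurable_one (allMeasurable _)),
      lintegral_indicator_one (allMeasurable _)]
  have h2 : ∀ v : Fin n, μ {ω | m ≤ compSize ω v}
      = ∫⁻ ω, ({ω : Sym2 (Fin n) → Bool | m ≤ compSize ω v}).indicator
          (1 : (Sym2 (Fin n) → Bool) → ℝ≥0∞) ω ∂μ :=
    fun v => (lintegral_indicator_one (allMeasurable _)).symm
  rw [h1, Finset.sum_congr rfl (fun v _ => h2 v), ← lintegral_finset_sum _
    (fun v _ => Measurable.indicator measurable_one (allMeasurable _))]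
  apply lintegral_mono
  intro ω
  simp only [Set.indicator_apply, Set.mem_setOf_eq, Pi.one_apply]
  by_cases hω : m ≤ maxCompSize n ω
  · rw [if_pos hω, mul_one]
    have hcount := count_lemma m hn1 ω hω
    have hsum : (∑ v : Fin n, if m ≤ compSize ω v then (1:ℝ≥0∞) else 0)
        = ((Finset.univ.filter (fun v : Fin n => m ≤ compSize ω v)).card : ℝ≥0∞) := by
      rw [Finset.card_filter]
      push_cast
      rfl
    rw [hsum]
    exact_mod_cast Nat.cast_le.2 hcount
  · rw [if_neg hω, mul_zero]
    exact zero_le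

lemma pow1000 : ((1000:ℝ))^((2:ℝ)/3) = 100 := by
  rw [show (1000:ℝ) = 10^(3:ℕ) by norm_num, ← Real.rpow_natCast 10 3,
    ← Real.rpow_mul (by norm_num)]
  rw [show ((3:ℕ):ℝ) * (2/3) = ((2:ℕ):ℝ) by norm_num, Real.rpow_natCast]
  norm_num

lemma n23_ge (n : ℕ) (hn : 1000 ≤ n) : (100:ℝ) ≤ (n:ℝ)^((2:ℝ)/3) := by
  rw [← pow1000]
  apply Real.rpow_le_rpow (by norm_num) (by exact_mod_cast hn) (by norm_num)

lemma A_ge (A : ℝ) (hA : 1 < A) (h6 : 6 < A ^ ((3:ℝ)/2)) : (3.3:ℝ) ≤ A := by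
  by_contra hcon
  push_neg at hcon
  have h1 : A ^ ((3:ℝ)/2) ≤ (3.3:ℝ) ^ ((3:ℝ)/2) :=
    Real.rpow_le_rpow (by linarith) (le_of_lt hcon) (by norm_num)
  have h2 : ((3.3:ℝ) ^ ((3:ℝ)/2)) ^ (2:ℕ) = (3.3:ℝ)^(3:ℕ) := by
    rw [← Real.rpow_natCast ((3.3:ℝ) ^ ((3:ℝ)/2)) 2, ← Real.rpow_mul (by norm_num)]
    rw [show (3:ℝ)/2 * ((2:ℕ):ℝ) = ((3:ℕ):ℝ) by norm_num]
    rw [Real.rpow_natCast]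
  have h3 : (3.3:ℝ) ^ ((3:ℝ)/2) < 6 := by
    have h4 : ((3.3:ℝ) ^ ((3:ℝ)/2)) ^ (2:ℕ) < 6^(2:ℕ) := by
      rw [h2]; norm_num
    exact lt_of_pow_lt_pow_left₀ 2 (by norm_num) h4
  linarith

set_option maxRecDepth 10000 in
set_option maxHeartbeats 2000000 in
theorem main_bound (n : ℕ) (hn : 1000 ≤ n) (A : ℝ) (hA : 1 < A) :
    erdosRenyi n ((n : ℝ≥0∞))⁻¹
        {ω | A * (n : ℝ) ^ ((2 : ℝ) / 3) < (maxCompSize n ω : ℝ)} ≤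
      ENNReal.ofReal (6 * A ^ (-(3 : ℝ) / 2)) := by
  classical
  have hn1 : 1 ≤ n := by omega
  have hnR : (0:ℝ) < (n:ℝ) := by exact_mod_cast hn1
  have hA0 : (0:ℝ) < A := by linarith
  have hexp : (-(3:ℝ)/2) = -((3:ℝ)/2) := by norm_num
  have hrpow_pos : (0:ℝ) < A ^ ((3:ℝ)/2) := Real.rpow_pos_of_pos hA0 _
  have hAneg : A ^ (-(3:ℝ)/2) = (A ^ ((3:ℝ)/2))⁻¹ := by
    rw [hexp, Real.rpow_neg (le_of_lt hA0)]
  have hpE1 : ((n : ℝ≥0∞))⁻¹ ≤ 1 := by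
    apply ENNReal.inv_le_one.mpr
    exact_mod_cast hn1
  haveI : IsProbabilityMeasure (erdosRenyi n ((n : ℝ≥0∞))⁻¹) := er_prob hpE1
  by_cases htriv : A ^ ((3:ℝ)/2) ≤ 6
  · calc erdosRenyi n ((n : ℝ≥0∞))⁻¹ _ ≤ 1 := prob_le_one
    _ ≤ ENNReal.ofReal (6 * A ^ (-(3:ℝ)/2)) := by
        rw [← ENNReal.ofReal_one]
        apply ENNReal.ofReal_le_ofReal
        rw [hAneg, show (6:ℝ) * (A ^ ((3:ℝ)/2))⁻¹ = 6 / (A ^ ((3:ℝ)/2)) by ring,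
          le_div_iff₀ hrpow_pos]
        linarith
  push_neg at htriv
  obtain ⟨m, hm⟩ : ∃ m : ℕ, m = Nat.floor (A * (n:ℝ)^((2:ℝ)/3)) + 1 := ⟨_, rfl⟩
  obtain ⟨M, hM⟩ : ∃ M : ℕ, M = m - 1 := ⟨_, rfl⟩
  have hMfloor : M = Nat.floor (A * (n:ℝ)^((2:ℝ)/3)) := by omega
  have hn23pos : (0:ℝ) < (n:ℝ)^((2:ℝ)/3) := Real.rpow_pos_of_pos hnR _
  have hm_gt : A * (n:ℝ)^((2:ℝ)/3) < (m:ℝ) := by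
    rw [hm]
    push_cast
    exact Nat.lt_floor_add_one _
  have hA33 : (3.3:ℝ) ≤ A := A_ge A hA htriv
  have hM330 : 330 ≤ M := by
    rw [hMfloor]
    apply Nat.le_floor
    have h100 := n23_ge n hn
    push_cast
    nlinarith
  have hm331 : 331 ≤ m := by omega
  have hM1 : 1 ≤ M := by omega
  have hmR0 : (0:ℝ) < (m:ℝ) := by
    have : (0:ℕ) < m := by omega
    exact_mod_cast this
  obtain ⟨B, hB⟩ : ∃ B : ℕ, B = Nat.sqrt M / 2 + 1 := ⟨_, rfl⟩
  have hB1 : 1 ≤ B := by omega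
  have hMR : (330:ℝ) ≤ (M:ℝ) := by exact_mod_cast hM330
  have hMR0 : (0:ℝ) < (M:ℝ) := by linarith
  have hsqM_pos : (0:ℝ) < Real.sqrt M := Real.sqrt_pos.mpr hMR0
  have hsq18 : (18:ℝ) ≤ Real.sqrt M := by
    rw [show (18:ℝ) = Real.sqrt 324 by
      rw [show (324:ℝ) = 18^2 by norm_num, Real.sqrt_sq (by norm_num)]]
    exact Real.sqrt_le_sqrt (by linarith)
  have hd_le : ((Nat.sqrt M : ℕ):ℝ) ≤ Real.sqrt M := by
    rw [Real.le_sqrt (by positivity) (by positivity)]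
    exact_mod_cast Nat.sqrt_le' M
  have hd_ge : Real.sqrt M ≤ ((Nat.sqrt M : ℕ):ℝ) + 1 := by
    have hcast : (M:ℝ) ≤ (((Nat.sqrt M : ℕ):ℝ) + 1)^2 := by
      have := le_of_lt (Nat.lt_succ_sqrt M)
      have h2 : (M:ℝ) ≤ ((Nat.sqrt M + 1 : ℕ):ℝ) * ((Nat.sqrt M + 1 : ℕ):ℝ) := by
        exact_mod_cast this
      push_cast at h2
      nlinarith [h2]
    calc Real.sqrt M ≤ Real.sqrt ((((Nat.sqrt M : ℕ):ℝ) + 1)^2) := Real.sqrt_le_sqrt hcast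
    _ = ((Nat.sqrt M : ℕ):ℝ) + 1 := Real.sqrt_sq (by positivity)
  have hBl : Real.sqrt M / 2 ≤ (B:ℝ) := by
    have hnat : Nat.sqrt M ≤ 2*(Nat.sqrt M/2) + 1 := by omega
    have hc : ((Nat.sqrt M : ℕ):ℝ) ≤ 2*((Nat.sqrt M/2 : ℕ):ℝ) + 1 := by exact_mod_cast hnat
    have hBc : (B:ℝ) = ((Nat.sqrt M/2 : ℕ):ℝ) + 1 := by
      rw [hB]; push_cast; ring
    rw [hBc]
    linarith
  have hBu : (B:ℝ) ≤ Real.sqrt M / 2 + 1 := by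
    have hnat : 2*(Nat.sqrt M/2) ≤ Nat.sqrt M := by omega
    have hc : 2*((Nat.sqrt M/2 : ℕ):ℝ) ≤ ((Nat.sqrt M : ℕ):ℝ) := by exact_mod_cast hnat
    have hBc : (B:ℝ) = ((Nat.sqrt M/2 : ℕ):ℝ) + 1 := by
      rw [hB]; push_cast; ring
    rw [hBc]
    linarith
  have hBR_pos : (0:ℝ) < (B:ℝ) := by
    have : (0:ℕ) < B := by omega
    exact_mod_cast this
  have hwalk := walk_bound (n:=n) (B:=B) (M:=M) hn hB1 hM1
  set G := (Top n)^[M] chif 1 with hG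
  have hG0 : 0 ≤ G := (g_props n M).2.1 1
  have hGb : G ≤ 61/18 / Real.sqrt M := by
    have h1 : 1/(B:ℝ) ≤ 2/Real.sqrt M := by
      rw [div_le_div_iff₀ hBR_pos hsqM_pos]
      linarith
    have hMsq : (M:ℝ) = Real.sqrt M * Real.sqrt M := (Real.mul_self_sqrt (le_of_lt hMR0)).symm
    have h2 : (5/4)*(2*(B:ℝ)-1)/M ≤ (5/4)/Real.sqrt M + (5/36)/Real.sqrt M := by
      have hup : (5/4)*(2*(B:ℝ)-1) ≤ (5/4)*Real.sqrt M + (5/4) := by nlinarith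
      rw [← add_div, div_le_div_iff₀ hMR0 hsqM_pos]
      calc (5/4)*(2*(B:ℝ)-1) * Real.sqrt M ≤ ((5/4)*Real.sqrt M + (5/4)) * Real.sqrt M := by
            nlinarith
      _ ≤ (5/4 + 5/36) * (Real.sqrt M * Real.sqrt M) := by nlinarith
      _ = (5/4 + 5/36) * M := by rw [← hMsq]
    calc G ≤ 1/(B:ℝ) + (5/4)*(2*(B:ℝ)-1)/M := hwalk
    _ ≤ 2/Real.sqrt M + ((5/4)/Real.sqrt M + (5/36)/Real.sqrt M) := by linarith
    _ = 61/18 / Real.sqrt M := by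
        field_simp
        ring
  have hsmpos : (0:ℝ) < Real.sqrt m := Real.sqrt_pos.mpr hmR0
  have hGm : G ≤ 6 / Real.sqrt m := by
    have hmM : (m:ℝ) = (M:ℝ) + 1 := by
      have : m = M + 1 := by omega
      rw [this]; push_cast; ring
    have hsm : Real.sqrt m ≤ Real.sqrt 2 * Real.sqrt M := by
      rw [← Real.sqrt_mul (by norm_num)]
      apply Real.sqrt_le_sqrt
      linarith
    have hs2 : Real.sqrt 2 ≤ 1.5 := by
      rw [show (1.5:ℝ) = Real.sqrt (1.5^2) by rw [Real.sqrt_sq (by norm_num)]]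
      exact Real.sqrt_le_sqrt (by norm_num)
    have hsm2 : Real.sqrt m ≤ 1.5 * Real.sqrt M := by nlinarith
    have hfinal : 61/18 / Real.sqrt M ≤ 6 / Real.sqrt m := by
      rw [div_le_div_iff₀ hsqM_pos hsmpos]
      nlinarith
    linarith
  -- per-vertex bound
  have hvert : ∀ v : Fin n, erdosRenyi n ((n : ℝ≥0∞))⁻¹ {ω | m ≤ compSize ω v}
      ≤ ENNReal.ofReal G := by
    intro v
    have hsub : {ω : Sym2 (Fin n) → Bool | m ≤ compSize ω v}
        ⊆ {ω | Surv ω M {v} (Finset.univ.erase v)} := by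
      intro ω hω
      simp only [Set.mem_setOf_eq] at hω ⊢
      have := surv_of_large ω v m (by omega) hω
      rw [hM]
      exact this
    calc erdosRenyi n ((n : ℝ≥0∞))⁻¹ {ω | m ≤ compSize ω v}
        ≤ erdosRenyi n ((n : ℝ≥0∞))⁻¹ {ω | Surv ω M {v} (Finset.univ.erase v)} :=
          measure_mono hsub
    _ ≤ ENNReal.ofReal ((Top n)^[M] chif ({v} : Finset (Fin n)).card) := by
          apply surv_measure n hn M {v} (Finset.univ.erase v)
          rw [Finset.disjoint_singleton_left]
          exact Finset.notMem_erase v _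
    _ = ENNReal.ofReal G := by rw [Finset.card_singleton]
  have hev : {ω : Sym2 (Fin n) → Bool | A * (n:ℝ)^((2:ℝ)/3) < (maxCompSize n ω:ℝ)}
      ⊆ {ω | m ≤ maxCompSize n ω} := by
    intro ω hω
    simp only [Set.mem_setOf_eq] at hω ⊢
    have hfl : Nat.floor (A * (n:ℝ)^((2:ℝ)/3)) < maxCompSize n ω := by
      rw [Nat.floor_lt (by positivity)]
      exact hω
    omega
  have hm0 : (m:ℝ≥0∞) ≠ 0 := by
    simp only [ne_eq, Nat.cast_eq_zero]
    omega
  have hmtop : (m:ℝ≥0∞) ≠ ⊤ := ENNReal.natCast_ne_top m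
  have hmain : erdosRenyi n ((n : ℝ≥0∞))⁻¹ {ω | m ≤ maxCompSize n ω}
      ≤ ((n:ℝ≥0∞) * ENNReal.ofReal G) / m := by
    rw [ENNReal.le_div_iff_mul_le (Or.inl hm0) (Or.inl hmtop)]
    calc erdosRenyi n ((n : ℝ≥0∞))⁻¹ {ω | m ≤ maxCompSize n ω} * (m:ℝ≥0∞)
        = (m:ℝ≥0∞) * erdosRenyi n ((n : ℝ≥0∞))⁻¹ {ω | m ≤ maxCompSize n ω} := mul_comm _ _
    _ ≤ ∑ v : Fin n, erdosRenyi n ((n : ℝ≥0∞))⁻¹ {ω | m ≤ compSize ω v} :=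
        moment_lemma n m hn1
    _ ≤ ∑ _v : Fin n, ENNReal.ofReal G := Finset.sum_le_sum (fun v _ => hvert v)
    _ = (n:ℝ≥0∞) * ENNReal.ofReal G := by
        rw [Finset.sum_const, Finset.card_univ, Fintype.card_fin, nsmul_eq_mul]
  have hfin : ((n:ℝ≥0∞) * ENNReal.ofReal G) / m ≤ ENNReal.ofReal (6 * A ^ (-(3:ℝ)/2)) := by
    have h1 : ((n:ℝ≥0∞) * ENNReal.ofReal G) / m = ENNReal.ofReal ((n:ℝ) * G / m) := by
      rw [ENNReal.ofReal_div_of_pos hmR0, ENNReal.ofReal_mul (by positivity),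
        ENNReal.ofReal_natCast, ENNReal.ofReal_natCast]
    rw [h1]
    apply ENNReal.ofReal_le_ofReal
    have hAle : A ≤ (m:ℝ)/(n:ℝ)^((2:ℝ)/3) := by
      rw [le_div_iff₀ hn23pos]
      linarith
    have h32 : A^((3:ℝ)/2) ≤ (m:ℝ)^((3:ℝ)/2)/(n:ℝ) := by
      calc A^((3:ℝ)/2) ≤ ((m:ℝ)/(n:ℝ)^((2:ℝ)/3))^((3:ℝ)/2) :=
            Real.rpow_le_rpow (le_of_lt hA0) hAle (by norm_num)
      _ = (m:ℝ)^((3:ℝ)/2)/(((n:ℝ)^((2:ℝ)/3))^((3:ℝ)/2)) :=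
            Real.div_rpow (by positivity) (le_of_lt hn23pos) _
      _ = (m:ℝ)^((3:ℝ)/2)/(n:ℝ) := by
            rw [← Real.rpow_mul (by positivity)]
            norm_num
    have hm32 : (m:ℝ)^((3:ℝ)/2) = m * Real.sqrt m := by
      rw [show (3:ℝ)/2 = 1 + 1/2 by norm_num, Real.rpow_add hmR0, Real.rpow_one,
        Real.sqrt_eq_rpow]
    have hAinv : (6:ℝ) * A^(-(3:ℝ)/2) = 6/(A^((3:ℝ)/2)) := by rw [hAneg]; ring
    rw [hAinv]
    have hstep1 : (n:ℝ)*G/m ≤ (n:ℝ)*(6/Real.sqrt m)/m := by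
      gcongr
    have hstep3 : (n:ℝ)*(6/Real.sqrt m)/m ≤ 6/(A^((3:ℝ)/2)) := by
      rw [div_le_div_iff₀ hmR0 hrpow_pos]
      have hkey : A^((3:ℝ)/2) * (n:ℝ) ≤ (m:ℝ) * Real.sqrt m := by
        rw [← hm32]
        exact (le_div_iff₀ hnR).mp h32
      have hG6 : (n:ℝ)*(6/Real.sqrt m) = 6*(n:ℝ)/Real.sqrt m := by ring
      calc (n:ℝ)*(6/Real.sqrt m) * A^((3:ℝ)/2) = 6*(n:ℝ)*A^((3:ℝ)/2)/Real.sqrt m := by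
            ring
      _ ≤ 6*(m:ℝ) := by
            rw [div_le_iff₀ hsmpos]
            nlinarith [hkey]
    linarith
  calc erdosRenyi n ((n : ℝ≥0∞))⁻¹
        {ω | A * (n : ℝ) ^ ((2 : ℝ) / 3) < (maxCompSize n ω : ℝ)}
      ≤ erdosRenyi n ((n : ℝ≥0∞))⁻¹ {ω | m ≤ maxCompSize n ω} := measure_mono hev
  _ ≤ ((n:ℝ≥0∞) * ENNReal.ofReal G) / m := hmain
  _ ≤ ENNReal.ofReal (6 * A ^ (-(3:ℝ)/2)) := hfin


end NPaux

/-- **Easy upper bound (Section 3), Nachmias–Peres.** For `n ≥ 1000` and `A > 1`,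
in `G(n,1/n)`, `P(|C₁| > A n^{2/3}) ≤ 6 A^{-3/2}`. -/
theorem largest_component_easy_upper_bound (n : ℕ) (hn : 1000 ≤ n) (A : ℝ) (hA : 1 < A) :
    erdosRenyi n ((n : ℝ≥0∞))⁻¹
        {ω | A * (n : ℝ) ^ ((2 : ℝ) / 3) < (maxCompSize n ω : ℝ)} ≤
      ENNReal.ofReal (6 * A ^ (-(3 : ℝ) / 2)) := by
  exact NPaux.main_bound n hn A hA
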